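/- arXiv:2002.05389 — 6 statements merged into one kernel-verified Lean document; each statement's English description precedes it below -/
import Mathlib

section
/- For any edge e in a graph G, the domination number of the graph obtained from G by subdividing e satisfies γ(G) ≤ γ(G_e) ≤ γ(G) + 1. -/
open SimpleGraph

/-- `D` is a dominating set of `G`. -/
def SimpleGraph.IsDomSet {V : Type*} (G : SimpleGraph V) (D : Set V) : Prop :=
  ∀ v ∉ D, ∃ u ∈ D, G.Adj u v

/-- The domination number of `G`. -/
noncomputable def SimpleGraph.domNum {V : Type*} [Fintype V] (G : SimpleGraph V) : ℕ :=
  sInf {k | ∃ D : Finset V, D.card = k ∧ G.IsDomSet ↑D}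

/-- The graph obtained from `G` by subdividing each edge in `F` once: each `e ∈ F`
contributes a new vertex adjacent to the two endpoints of `e`, and the edges of `F`
are removed. -/
def SimpleGraph.subdiv {V : Type*} (G : SimpleGraph V) (F : Finset (Sym2 V)) :
    SimpleGraph (V ⊕ {e : Sym2 V // e ∈ F}) :=
  SimpleGraph.fromRel (fun a b => match a, b with
    | Sum.inl u, Sum.inl v => G.Adj u v ∧ s(u, v) ∉ F
    | Sum.inl u, Sum.inr e => u ∈ (e : Sym2 V)
    | _, _ => False)

/-- `G` is `γ`-`q`-critical: subdividing any `q` edges increases the domination number,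
while some set of `q - 1` edges can be subdivided without increasing it. -/
def SimpleGraph.IsQCritical {V : Type*} [Fintype V] (G : SimpleGraph V) (q : ℕ) : Prop :=
  (∀ F : Finset (Sym2 V), ↑F ⊆ G.edgeSet → F.card = q →
      G.domNum < (G.subdiv F).domNum) ∧
  (∃ F : Finset (Sym2 V), ↑F ⊆ G.edgeSet ∧ F.card = q - 1 ∧
      (G.subdiv F).domNum = G.domNum)

lemma SimpleGraph.domNum_exists {V : Type*} [Fintype V] (G : SimpleGraph V) :
    ∃ D : Finset V, D.card = G.domNum ∧ G.IsDomSet ↑D := by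
  have hne : {k | ∃ D : Finset V, D.card = k ∧ G.IsDomSet ↑D}.Nonempty :=
    ⟨Finset.univ.card, Finset.univ, rfl, fun v hv => absurd (by simp) hv⟩
  exact Nat.sInf_mem hne

lemma SimpleGraph.domNum_le_card {V : Type*} [Fintype V] (G : SimpleGraph V)
    (D : Finset V) (h : G.IsDomSet ↑D) : G.domNum ≤ D.card :=
  Nat.sInf_le ⟨D, rfl, h⟩

theorem stmt0 {V : Type*} [Fintype V] (G : SimpleGraph V) (e : Sym2 V)
    (he : e ∈ G.edgeSet) :
    G.domNum ≤ (G.subdiv {e}).domNum ∧ (G.subdiv {e}).domNum ≤ G.domNum + 1 := by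
  classical
  induction e using Sym2.ind with
  | _ u v =>
  rw [SimpleGraph.mem_edgeSet] at he
  set F : Finset (Sym2 V) := {s(u, v)} with hF
  have hwmem : s(u, v) ∈ F := Finset.mem_singleton_self _
  set w : {e : Sym2 V // e ∈ F} := ⟨s(u, v), hwmem⟩ with hw
  constructor
  · -- lower bound
    obtain ⟨D', hcard, hdom⟩ := (G.subdiv F).domNum_exists
    refine le_trans (G.domNum_le_card (D'.image (Sum.elim id fun _ => u)) ?_)
      (hcard ▸ Finset.card_image_le)
    intro x hx
    have hx' : Sum.inl x ∉ (D' : Set (V ⊕ {e : Sym2 V // e ∈ F})) := fun h =>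
      hx (Finset.mem_coe.mpr (Finset.mem_image.mpr ⟨Sum.inl x, h, rfl⟩))
    obtain ⟨d', hd', hadj⟩ := hdom _ hx'
    rw [SimpleGraph.subdiv, SimpleGraph.fromRel_adj] at hadj
    rcases d' with d | w'
    · refine ⟨d, Finset.mem_coe.mpr (Finset.mem_image.mpr ⟨Sum.inl d, hd', rfl⟩), ?_⟩
      rcases hadj.2 with ⟨h1, _⟩ | ⟨h1, _⟩
      · exact h1
      · exact h1.symm
    · have hwe : (w' : Sym2 V) = s(u, v) := Finset.mem_singleton.mp w'.2
      have hmemx : x ∈ (w' : Sym2 V) := by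
        rcases hadj.2 with h | h
        · exact absurd h (fun h => h)
        · exact h
      rw [hwe, Sym2.mem_iff] at hmemx
      have hu : u ∈ D'.image (Sum.elim id fun _ => u) :=
        Finset.mem_image.mpr ⟨Sum.inr w', hd', rfl⟩
      rcases hmemx with rfl | rfl
      · exact absurd (Finset.mem_coe.mpr hu) hx
      · exact ⟨u, Finset.mem_coe.mpr hu, he⟩
  · -- upper bound
    obtain ⟨D, hcard, hdom⟩ := G.domNum_exists
    have key : (G.subdiv F).IsDomSet ↑(D.image Sum.inl ∪ {Sum.inr w}) := by
      intro x hx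
      rcases x with a | w'
      · have ha : a ∉ D := fun h => hx (by
          simp only [Finset.coe_union, Set.mem_union, Finset.mem_coe,
            Finset.mem_image]
          exact Or.inl ⟨a, h, rfl⟩)
        obtain ⟨d, hd, hadj⟩ := hdom a ha
        by_cases hde : s(d, a) = s(u, v)
        · refine ⟨Sum.inr w, by simp, ?_⟩
          rw [SimpleGraph.subdiv, SimpleGraph.fromRel_adj]
          refine ⟨by simp, Or.inr ?_⟩
          show a ∈ (w : Sym2 V)
          rw [hw]
          show a ∈ s(u, v)
          rw [← hde]
          exact Sym2.mem_mk_right d a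
        · refine ⟨Sum.inl d, by simp [Finset.mem_coe.mp hd], ?_⟩
          rw [SimpleGraph.subdiv, SimpleGraph.fromRel_adj]
          exact ⟨by simpa using hadj.ne, Or.inl ⟨hadj, by simpa [hF] using hde⟩⟩
      · exfalso
        apply hx
        have : w' = w := Subtype.ext (by rw [Finset.mem_singleton.mp w'.2, hw])
        simp [this]
    calc (G.subdiv F).domNum ≤ (D.image Sum.inl ∪ {Sum.inr w}).card :=
          (G.subdiv F).domNum_le_card _ key
      _ ≤ (D.image Sum.inl).card + ({Sum.inr w} : Finset _).card :=
          Finset.card_union_le _ _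
      _ ≤ D.card + 1 := by
          simpa using Nat.add_le_add_right (Finset.card_image_le) 1
      _ = G.domNum + 1 := by rw [hcard]
end

section
/- If a graph G is γ-q-critical, then for any minimum dominating set D of G and every vertex v not in D, the number of neighbours of v in D is at most q. -/
open SimpleGraph

theorem stmt3 {V : Type*} [Fintype V] (G : SimpleGraph V) [DecidableRel G.Adj]
    (q : ℕ) (h : G.IsQCritical q) (D : Finset V) (hD : G.IsDomSet ↑D)
    (hcard : D.card = G.domNum) (v : V) (hv : v ∉ D) :
    (D.filter (fun u => G.Adj u v)).card ≤ q := by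
  classical
  by_contra hgt
  push_neg at hgt
  set N := D.filter (fun u => G.Adj u v) with hN
  have hND : N ⊆ D := Finset.filter_subset _ _
  obtain ⟨S, hSN, hScard⟩ := Finset.exists_subset_card_eq (s := N) (n := q) hgt.le
  set F : Finset (Sym2 V) := S.image (fun u => s(u, v)) with hF
  have key : ∀ u ∈ D, ∀ u' ∈ D, s(u, v) = s(u', v) → u = u' := by
    intro u hu u' hu' he
    rcases Sym2.eq_iff.mp he with ⟨h1, _⟩ | ⟨h1, h2⟩
    · exact h1
    · exact absurd (h1 ▸ hu) hv
  have hFcard : F.card = q := by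
    rw [hF, Finset.card_image_of_injOn, hScard]
    intro u hu u' hu' he
    exact key u (hND (hSN hu)) u' (hND (hSN hu')) he
  have hFsub : ↑F ⊆ G.edgeSet := by
    intro e he
    simp only [hF, Finset.mem_coe, Finset.mem_image] at he
    obtain ⟨u, hu, rfl⟩ := he
    exact (Finset.mem_filter.mp (hSN hu)).2
  have hlt := h.1 F hFsub hFcard
  have hdom : (G.subdiv F).IsDomSet
      ↑(D.image (Sum.inl : V → V ⊕ {e : Sym2 V // e ∈ F})) := by
    intro x hx
    rcases x with w | e
    · have hw : w ∉ D := by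
        intro hwD
        exact hx (by simp [Finset.mem_coe, Finset.mem_image]; exact hwD)
      by_cases hwv : w = v
      · subst hwv
        have hns : ¬ N ⊆ S := fun hsub => absurd (Finset.card_le_card hsub) (by omega)
        obtain ⟨u, huN, huS⟩ := Finset.not_subset.mp hns
        have huD : u ∈ D := hND huN
        refine ⟨Sum.inl u, by simp [Finset.mem_image]; exact huD, ?_⟩
        rw [SimpleGraph.subdiv, SimpleGraph.fromRel_adj]
        refine ⟨by simp; rintro rfl; exact hv huD, Or.inl ?_⟩
        refine ⟨(Finset.mem_filter.mp huN).2, ?_⟩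
        intro hmem
        obtain ⟨u', hu', he⟩ := Finset.mem_image.mp hmem
        exact huS (key u' (hND (hSN hu')) u huD he ▸ hu')
      · obtain ⟨u, huD, hadj⟩ := hD w hw
        refine ⟨Sum.inl u, by simp [Finset.mem_image]; exact huD, ?_⟩
        rw [SimpleGraph.subdiv, SimpleGraph.fromRel_adj]
        refine ⟨by simp; rintro rfl; exact hw huD, Or.inl ?_⟩
        refine ⟨hadj, ?_⟩
        intro hmem
        obtain ⟨u', hu', he⟩ := Finset.mem_image.mp hmem
        rcases Sym2.eq_iff.mp he with ⟨h1, h2⟩ | ⟨h1, h2⟩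
        · exact hwv h2.symm
        · exact hv (h2 ▸ huD)
    · obtain ⟨u, huS, hue⟩ := Finset.mem_image.mp e.2
      have huD : u ∈ D := hND (hSN huS)
      refine ⟨Sum.inl u, by simp [Finset.mem_image]; exact huD, ?_⟩
      rw [SimpleGraph.subdiv, SimpleGraph.fromRel_adj]
      exact ⟨by simp, Or.inl (show u ∈ (e : Sym2 V) by rw [← hue]; exact Sym2.mem_mk_left u v)⟩
  have hle : (G.subdiv F).domNum ≤ D.card := by
    apply Nat.sInf_le
    exact ⟨D.image Sum.inl, Finset.card_image_of_injective _ Sum.inl_injective, hdom⟩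
  omega
end

section
/- If a graph G has a minimum dominating set D such that some vertex outside D has exactly k neighbours in D, then for every ℓ with 1 ≤ ℓ ≤ k−1 the graph G is not γ-(k−ℓ)-critical. -/
open SimpleGraph

lemma subdiv_adj_inl {V : Type*} (G : SimpleGraph V) (F : Finset (Sym2 V))
    {u w : V} (h : G.Adj u w) (h2 : s(u, w) ∉ F) :
    (G.subdiv F).Adj (Sum.inl u) (Sum.inl w) := by
  refine ⟨by simp [h.ne], Or.inl ?_⟩
  exact ⟨h, h2⟩

lemma subdiv_adj_inr {V : Type*} (G : SimpleGraph V) (F : Finset (Sym2 V))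
    {u : V} {e : {e : Sym2 V // e ∈ F}} (h : u ∈ (e : Sym2 V)) :
    (G.subdiv F).Adj (Sum.inl u) (Sum.inr e) := by
  exact ⟨by simp, Or.inl h⟩

theorem stmt4 {V : Type*} [Fintype V] (G : SimpleGraph V) [DecidableRel G.Adj]
    (D : Finset V) (hD : G.IsDomSet ↑D) (hcard : D.card = G.domNum)
    (v : V) (hv : v ∉ D) (k : ℕ) (hk : (D.filter (fun u => G.Adj u v)).card = k)
    (ℓ : ℕ) (h1 : 1 ≤ ℓ) (h2 : ℓ ≤ k - 1) :
    ¬ G.IsQCritical (k - ℓ) := by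
  classical
  rintro ⟨hcrit, -⟩
  set N := D.filter (fun u => G.Adj u v) with hN
  have hk2 : 2 ≤ k := by omega
  have hqk : k - ℓ < k := by omega
  obtain ⟨S, hSN, hScard⟩ := Finset.exists_subset_card_eq (s := N) (n := k - ℓ) (by omega)
  have hSmem : ∀ u ∈ S, u ∈ D ∧ G.Adj u v := by
    intro u hu
    have := hSN hu
    rw [hN, Finset.mem_filter] at this
    exact this
  set F := S.image (fun u => s(u, v)) with hF
  have hmemF : ∀ e ∈ F, ∃ a ∈ S, s(a, v) = e := by
    intro e he
    rw [hF, Finset.mem_image] at he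
    obtain ⟨a, ha, rfl⟩ := he
    exact ⟨a, ha, rfl⟩
  have hFcard : F.card = k - ℓ := by
    rw [hF, Finset.card_image_of_injOn, hScard]
    intro a ha b hb hab
    rcases Sym2.eq_iff.mp hab with ⟨h, -⟩ | ⟨h, h'⟩
    · exact h
    · exact absurd ((hSmem a ha).1) (h ▸ hv)
  have hFsub : ↑F ⊆ G.edgeSet := by
    intro e he
    obtain ⟨a, ha, rfl⟩ := hmemF e he
    exact (hSmem a ha).2
  have hlt := hcrit F hFsub hFcard
  have hdom : (G.subdiv F).domNum ≤ G.domNum := by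
    rw [← hcard]
    have hsub : (G.subdiv F).IsDomSet ↑(D.image (Sum.inl : V → V ⊕ {e : Sym2 V // e ∈ F})) := by
      intro x hx
      match x with
      | Sum.inl w =>
        have hwD : w ∉ D := fun hwD => hx (by simp [hwD])
        by_cases hwv : w = v
        · subst hwv
          have hns : ¬ N ⊆ S := fun h => by
            have := Finset.card_le_card h; omega
          obtain ⟨u, huN, huS⟩ := Finset.not_subset.mp hns
          rw [hN, Finset.mem_filter] at huN
          refine ⟨Sum.inl u, by simp [huN.1], subdiv_adj_inl G F huN.2 ?_⟩
          intro hmem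
          obtain ⟨a, haS, hae⟩ := hmemF _ hmem
          rcases Sym2.eq_iff.mp hae with ⟨h, -⟩ | ⟨-, h'⟩
          · exact huS (h ▸ haS)
          · exact hwD (by rw [h']; exact huN.1)
        · obtain ⟨u, huD, hadj⟩ := hD w hwD
          have huD' : u ∈ D := Finset.mem_coe.mp huD
          refine ⟨Sum.inl u, by simp [huD'], subdiv_adj_inl G F hadj ?_⟩
          intro hmem
          obtain ⟨a, haS, hae⟩ := hmemF _ hmem
          rcases Sym2.eq_iff.mp hae with ⟨-, h⟩ | ⟨-, h⟩
          · exact hwv h.symm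
          · exact hv (by rw [h]; exact huD')
      | Sum.inr e =>
        obtain ⟨a, haS, hae⟩ := hmemF e.1 e.2
        refine ⟨Sum.inl a, by simp [(hSmem a haS).1], subdiv_adj_inr G F ?_⟩
        rw [← hae]
        exact Sym2.mem_mk_left a v
    apply Nat.sInf_le
    exact ⟨D.image Sum.inl, Finset.card_image_of_injective _ Sum.inl_injective, hsub⟩
  omega
end

section
/- If G contains a universal vertex (a vertex adjacent to all other vertices) and G has at least 3 vertices, then subdividing any single edge of G increases the domination number; that is, G is γ-1-critical. -/
open SimpleGraph

lemma domNum_eq_one {V : Type*} [Fintype V] [Nonempty V] (G : SimpleGraph V) (x : V)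
    (h : G.IsDomSet {x}) : G.domNum = 1 := by
  have h1 : 1 ∈ {k | ∃ D : Finset V, D.card = k ∧ G.IsDomSet ↑D} :=
    ⟨{x}, Finset.card_singleton x, by simpa using h⟩
  refine le_antisymm (Nat.sInf_le h1) ?_
  rw [Nat.one_le_iff_ne_zero]
  intro h0
  rw [SimpleGraph.domNum, Nat.sInf_eq_zero] at h0
  rcases h0 with h0 | h0
  · obtain ⟨D, hDc, hDd⟩ := h0
    rw [Finset.card_eq_zero] at hDc
    subst hDc
    obtain ⟨u, hu, -⟩ := hDd (Classical.arbitrary V) (by simp)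
    simp at hu
  · exact absurd h1 (by simp [h0])

theorem stmt5 {V : Type*} [Fintype V] (G : SimpleGraph V) (hconn : G.Connected)
    (hcard : 3 ≤ Fintype.card V) (v : V) (hv : ∀ u, u ≠ v → G.Adj v u) :
    G.IsQCritical 1 := by
  classical
  have hne : Nonempty V := ⟨v⟩
  have hdomG : G.domNum = 1 := by
    apply domNum_eq_one G v
    intro u hu
    exact ⟨v, Set.mem_singleton v, hv u (by simpa using hu)⟩
  constructor
  · intro F hF hc1
    obtain ⟨e, rfl⟩ := Finset.card_eq_one.mp hc1
    have heE : e ∈ G.edgeSet := hF (Finset.mem_singleton_self e)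
    rw [hdomG]
    induction e using Sym2.ind with
    | _ a b =>
      have hab : G.Adj a b := (SimpleGraph.mem_edgeSet G).mp heE
      -- find c distinct from a and b
      have hex : ∃ c, c ≠ a ∧ c ≠ b := by
        by_contra hcon
        push_neg at hcon
        have hsub : (Finset.univ : Finset V) ⊆ {a, b} := by
          intro c _
          by_cases hc : c = a
          · simp [hc]
          · simp [hcon c hc]
        have h2 : Fintype.card V ≤ ({a, b} : Finset V).card := by
          rw [← Finset.card_univ]; exact Finset.card_le_card hsub
        have h3 : ({a, b} : Finset V).card ≤ 2 := Finset.card_le_two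
        omega
      obtain ⟨c, hca, hcb⟩ := hex
      -- show 2 ≤ domNum of the subdivision
      have hnempty : {k | ∃ D : Finset (V ⊕ {e : Sym2 V // e ∈ ({s(a,b)} : Finset (Sym2 V))}),
          D.card = k ∧ (G.subdiv {s(a,b)}).IsDomSet ↑D}.Nonempty := by
        exact ⟨_, Finset.univ, rfl, fun x hx => absurd (Finset.mem_coe.mpr (Finset.mem_univ x)) hx⟩
      refine lt_of_lt_of_le Nat.one_lt_two ?_
      rw [SimpleGraph.domNum]
      refine le_csInf hnempty ?_
      intro k hk
      obtain ⟨D, hDcard, hDdom⟩ := hk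
      by_contra hk2
      push_neg at hk2
      interval_cases k
      · -- empty dominating set: contradiction
        rw [Finset.card_eq_zero] at hDcard
        subst hDcard
        obtain ⟨u, hu, -⟩ := hDdom (Sum.inl a) (by simp)
        simp at hu
      · -- singleton dominating set
        rw [Finset.card_eq_one] at hDcard
        obtain ⟨x, rfl⟩ := hDcard
        set w : V ⊕ {e : Sym2 V // e ∈ ({s(a,b)} : Finset (Sym2 V))} :=
          Sum.inr ⟨s(a,b), Finset.mem_singleton_self _⟩ with hw
        match x with
        | Sum.inr e' =>
          -- x is the new vertex; c is not dominated
          obtain ⟨u, hu, hadj⟩ := hDdom (Sum.inl c) (by simp)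
          simp only [Finset.coe_singleton, Set.mem_singleton_iff] at hu
          subst hu
          have he' : (e' : Sym2 V) = s(a, b) := Finset.mem_singleton.mp e'.2
          rw [SimpleGraph.subdiv, SimpleGraph.fromRel_adj] at hadj
          obtain ⟨-, h | h⟩ := hadj
          · exact h
          · simp only at h
            rw [he', Sym2.mem_iff] at h
            rcases h with h | h
            · exact hca h
            · exact hcb h
        | Sum.inl u =>
          -- x = inl u; w must be dominated, forcing u ∈ {a, b}
          obtain ⟨y, hy, hadj⟩ := hDdom w (by simp [hw])
          simp only [Finset.coe_singleton, Set.mem_singleton_iff] at hy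
          subst hy
          rw [SimpleGraph.subdiv, SimpleGraph.fromRel_adj] at hadj
          have hu : u ∈ s(a, b) := by
            obtain ⟨-, h | h⟩ := hadj
            · exact h
            · exact absurd h (by simp [hw])
          -- now the other endpoint is not dominated
          rw [Sym2.mem_iff] at hu
          have key : ∀ p q : V, G.Adj p q → u = p → s(p, q) = s(a, b) →
              ¬ ∃ z ∈ (({Sum.inl u} : Finset (V ⊕ {e : Sym2 V // e ∈ ({s(a,b)} : Finset (Sym2 V))})) : Set _),
                (G.subdiv {s(a,b)}).Adj z (Sum.inl q) := by
            intro p q hpq hup hs ⟨z, hz, hzadj⟩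
            simp only [Finset.coe_singleton, Set.mem_singleton_iff] at hz
            subst hz hup
            rw [SimpleGraph.subdiv, SimpleGraph.fromRel_adj] at hzadj
            obtain ⟨-, h | h⟩ := hzadj
            · exact h.2 (Finset.mem_singleton.mpr hs)
            · exact h.2 (Finset.mem_singleton.mpr ((Sym2.eq_swap).trans hs))
          rcases hu with h' | h'
          · exact key a b hab h' rfl (hDdom (Sum.inl b) (by simp [h', hab.ne']))
          · exact key b a hab.symm h' Sym2.eq_swap (hDdom (Sum.inl a) (by simp [h', hab.ne]))
  · refine ⟨∅, by simp, by simp, ?_⟩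
    rw [hdomG]
    apply domNum_eq_one _ (Sum.inl v)
    intro x hx
    refine ⟨Sum.inl v, Set.mem_singleton _, ?_⟩
    match x with
    | Sum.inr e => exact absurd e.2 (Finset.notMem_empty _)
    | Sum.inl u =>
      have huv : u ≠ v := by simpa using hx
      rw [SimpleGraph.subdiv, SimpleGraph.fromRel_adj]
      exact ⟨by simpa using huv.symm, Or.inl ⟨hv u huv, by simp⟩⟩
end

section
/- A graph G is γ-1-critical if and only if every minimum dominating set of G is a 2-packing (i.e., any two distinct vertices of the set are at distance greater than 2). -/
open SimpleGraph

namespace SimpleGraph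
variable {V : Type*} {G : SimpleGraph V}

lemma domNum_le [Fintype V] (G : SimpleGraph V) (D : Finset V) (hD : G.IsDomSet ↑D) :
    G.domNum ≤ D.card := Nat.sInf_le ⟨D, rfl, hD⟩

lemma exists_min_domSet [Fintype V] (G : SimpleGraph V) :
    ∃ D : Finset V, D.card = G.domNum ∧ G.IsDomSet ↑D := by
  have hne : {k | ∃ D : Finset V, D.card = k ∧ G.IsDomSet ↑D}.Nonempty :=
    ⟨(Finset.univ : Finset V).card, Finset.univ, rfl, fun v hv => absurd (by simp) hv⟩
  obtain ⟨D, h1, h2⟩ := Nat.sInf_mem hne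
  exact ⟨D, h1, h2⟩

lemma subdiv_adj_inl_inl {F : Finset (Sym2 V)} {u v : V} :
    (G.subdiv F).Adj (Sum.inl u) (Sum.inl v) ↔ G.Adj u v ∧ s(u, v) ∉ F := by
  constructor
  · rintro ⟨hne, h | h⟩
    · exact h
    · exact ⟨h.1.symm, fun hm => h.2 (by rwa [Sym2.eq_swap] at hm)⟩
  · intro h
    exact ⟨fun he => h.1.ne (Sum.inl.inj he), Or.inl h⟩

lemma subdiv_adj_inl_inr {F : Finset (Sym2 V)} {u : V} {e : {e : Sym2 V // e ∈ F}} :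
    (G.subdiv F).Adj (Sum.inl u) (Sum.inr e) ↔ u ∈ (e : Sym2 V) := by
  constructor
  · rintro ⟨-, h | h⟩
    · exact h
    · exact h.elim
  · intro h
    exact ⟨fun he => by simp at he, Or.inl h⟩


lemma domNum_subdiv_empty [Fintype V] (G : SimpleGraph V) :
    (G.subdiv (∅ : Finset (Sym2 V))).domNum = G.domNum := by
  classical
  apply le_antisymm
  · obtain ⟨D, hcard, hdom⟩ := G.exists_min_domSet
    have hds : (G.subdiv (∅ : Finset (Sym2 V))).IsDomSet
        ↑(D.image (Sum.inl : V → V ⊕ {e : Sym2 V // e ∈ (∅ : Finset (Sym2 V))})) := by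
      rintro (v | e) hv
      · have hvD : v ∉ (D : Set V) := fun h =>
          hv (Finset.mem_coe.mpr (Finset.mem_image.mpr ⟨v, h, rfl⟩))
        obtain ⟨u, hu, hadj⟩ := hdom v hvD
        exact ⟨Sum.inl u, Finset.mem_coe.mpr (Finset.mem_image.mpr ⟨u, hu, rfl⟩),
          subdiv_adj_inl_inl.mpr ⟨hadj, by simp⟩⟩
      · exact absurd e.2 (Finset.notMem_empty _)
    calc (G.subdiv (∅ : Finset (Sym2 V))).domNum ≤ (D.image Sum.inl).card :=
          domNum_le _ _ hds
      _ = D.card := Finset.card_image_of_injective _ Sum.inl_injective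
      _ = G.domNum := hcard
  · obtain ⟨D', hcard, hdom⟩ := (G.subdiv (∅ : Finset (Sym2 V))).exists_min_domSet
    set f : V ⊕ {e : Sym2 V // e ∈ (∅ : Finset (Sym2 V))} → V :=
      Sum.elim id (fun e => absurd e.2 (Finset.notMem_empty _)) with hf
    have hds : G.IsDomSet ↑(D'.image f) := by
      intro v hv
      have hvD : Sum.inl v ∉ (↑D' : Set (V ⊕ {e : Sym2 V // e ∈ (∅ : Finset (Sym2 V))})) :=
        fun h => hv (Finset.mem_coe.mpr (Finset.mem_image.mpr ⟨Sum.inl v, Finset.mem_coe.mp h, rfl⟩))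
      obtain ⟨a, ha, hadj⟩ := hdom _ hvD
      cases a with
      | inl x =>
        exact ⟨x, Finset.mem_coe.mpr (Finset.mem_image.mpr ⟨Sum.inl x, ha, rfl⟩),
          (subdiv_adj_inl_inl.mp hadj).1⟩
      | inr e => exact absurd e.2 (Finset.notMem_empty _)
    calc G.domNum ≤ (D'.image f).card := domNum_le _ _ hds
      _ ≤ D'.card := Finset.card_image_le
      _ = (G.subdiv (∅ : Finset (Sym2 V))).domNum := hcard


lemma key [Fintype V] (G : SimpleGraph V) (hconn : G.Connected) (hcard : 3 ≤ Fintype.card V)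
    (hpack : ∀ D : Finset V, G.IsDomSet ↑D → D.card = G.domNum →
        ∀ x ∈ D, ∀ y ∈ D, x ≠ y → 2 < G.dist x y)
    (u v : V) (huv : G.Adj u v)
    (hle : (G.subdiv {s(u, v)}).domNum ≤ G.domNum) : False := by
  classical
  set F : Finset (Sym2 V) := {s(u, v)} with hF
  obtain ⟨D', hcard', hdom'⟩ := (G.subdiv F).exists_min_domSet
  have hcardle : D'.card ≤ G.domNum := hcard' ▸ hle
  have hW : ∀ e : {e : Sym2 V // e ∈ F}, (e : Sym2 V) = s(u, v) := fun e =>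
    Finset.mem_singleton.mp e.2
  set w : {e : Sym2 V // e ∈ F} := ⟨s(u, v), Finset.mem_singleton_self _⟩ with hw
  have hWw : ∀ e : {e : Sym2 V // e ∈ F}, e = w := fun e => Subtype.ext (hW e)
  set Dt : V → Finset V := fun t => D'.image (Sum.elim id (fun _ => t)) with hDt
  have hmemD : ∀ t x, Sum.inl x ∈ D' → x ∈ Dt t := fun t x hx =>
    Finset.mem_image.mpr ⟨Sum.inl x, hx, rfl⟩
  have hmemW : ∀ t, Sum.inr w ∈ D' → t ∈ Dt t := fun t hx =>
    Finset.mem_image.mpr ⟨Sum.inr w, hx, rfl⟩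
  -- dist helpers
  have hd1 : ∀ {x y : V}, G.Adj x y → G.dist x y ≤ 2 := by
    intro x y h
    have := dist_le h.toWalk
    simp only [Adj.toWalk, Walk.length_cons, Walk.length_nil] at this
    omega
  have hd2 : ∀ {x y z : V}, G.Adj x y → G.Adj y z → G.dist x z ≤ 2 := by
    intro x y z h h'
    have := dist_le (Walk.cons h h'.toWalk)
    simp only [Adj.toWalk, Walk.length_cons, Walk.length_nil] at this
    omega
  -- Dt t is a dominating set of G
  have hdomt : ∀ t s : V, G.Adj t s → s(t, s) = s(u, v) → G.IsDomSet ↑(Dt t) := by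
    intro t s hts hE v₀ hv₀
    have hv₀D : v₀ ∉ Dt t := fun h => hv₀ (Finset.mem_coe.mpr h)
    have hinl : Sum.inl v₀ ∉ (↑D' : Set (V ⊕ {e : Sym2 V // e ∈ F})) := fun h =>
      hv₀D (hmemD t v₀ (Finset.mem_coe.mp h))
    obtain ⟨a, ha, hadj⟩ := hdom' _ hinl
    cases a with
    | inl x =>
      exact ⟨x, Finset.mem_coe.mpr (hmemD t x (Finset.mem_coe.mp ha)),
        (subdiv_adj_inl_inl.mp hadj).1⟩
    | inr e =>
      have hwD : Sum.inr w ∈ D' := (hWw e) ▸ (Finset.mem_coe.mp ha)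
      have htD : t ∈ Dt t := hmemW t hwD
      have hv₀mem : v₀ ∈ s(t, s) := by
        rw [hE, ← hW e]
        exact subdiv_adj_inl_inr.mp hadj.symm
      have hv₀t : v₀ ≠ t := fun h => hv₀D (h ▸ htD)
      have hv₀s : v₀ = s := (Sym2.mem_iff.mp hv₀mem).resolve_left hv₀t
      exact ⟨t, Finset.mem_coe.mpr htD, hv₀s ▸ hts⟩
  have hDtmin : ∀ t s : V, G.Adj t s → s(t, s) = s(u, v) → (Dt t).card = G.domNum :=
    fun t s hts hE => le_antisymm (le_trans Finset.card_image_le hcardle)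
      (G.domNum_le _ (hdomt t s hts hE))
  have hpair : ∀ t s : V, G.Adj t s → s(t, s) = s(u, v) →
      ∀ x ∈ Dt t, ∀ y ∈ Dt t, x ≠ y → G.dist x y ≤ 2 → False := by
    intro t s hts hE x hx y hy hxy hdist
    exact absurd (hpack (Dt t) (hdomt t s hts hE) (hDtmin t s hts hE) x hx y hy hxy)
      (not_lt.mpr hdist)
  -- there is a third vertex adjacent to u or v
  have hz : ∃ z : V, z ≠ u ∧ z ≠ v ∧ (G.Adj z u ∨ G.Adj z v) := by
    by_contra h
    push_neg at h
    have hstep : ∀ {a b : V}, G.Adj a b → (a = u ∨ a = v) → (b = u ∨ b = v) := by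
      intro a b hab ha
      by_contra hb
      push_neg at hb
      rcases ha with rfl | rfl
      · exact (h b hb.1 hb.2).1 hab.symm
      · exact (h b hb.1 hb.2).2 hab.symm
    have hwalk : ∀ {a b : V} (_ : G.Walk a b), (a = u ∨ a = v) → (b = u ∨ b = v) := by
      intro a b p
      induction p with
      | nil => exact id
      | cons hab p ih => exact fun ha => ih (hstep hab ha)
    obtain ⟨t, htu, htv⟩ : ∃ t : V, t ≠ u ∧ t ≠ v := by
      by_contra h3
      push_neg at h3
      have hsub : (Finset.univ : Finset V) ⊆ {u, v} := by
        intro t _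
        by_cases h4 : t = u
        · simp [h4]
        · simp [h3 t h4]
      have h5 := Finset.card_le_card hsub
      rw [Finset.card_univ] at h5
      have h6 : ({u, v} : Finset V).card ≤ 2 := Finset.card_le_two
      omega
    obtain ⟨p⟩ := hconn.preconnected u t
    rcases hwalk p (Or.inl rfl) with h' | h'
    · exact htu h'
    · exact htv h'
  -- the central contradiction
  have hcenter : ∀ t s : V, G.Adj t s → s(t, s) = s(u, v) → t ∈ Dt t → False := by
    intro t s hts hE htD
    have hE' : s(s, t) = s(u, v) := (Sym2.eq_swap).trans hE
    by_cases hsD : s ∈ Dt t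
    · exact hpair t s hts hE t htD s hsD hts.ne (hd1 hts)
    · have hinls : Sum.inl s ∉ (↑D' : Set (V ⊕ {e : Sym2 V // e ∈ F})) := fun h =>
        hsD (hmemD t s (Finset.mem_coe.mp h))
      obtain ⟨a, ha, hadj⟩ := hdom' _ hinls
      cases a with
      | inl x =>
        obtain ⟨hxs, hxE⟩ := subdiv_adj_inl_inl.mp hadj
        have hxt : x ≠ t := by
          intro hh
          apply hxE
          rw [hh, hE]
          exact Finset.mem_singleton_self _
        exact hpair t s hts hE x (hmemD t x (Finset.mem_coe.mp ha)) t htD hxt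
          (hd2 hxs hts.symm)
      | inr e =>
        have hwD : Sum.inr w ∈ D' := (hWw e) ▸ (Finset.mem_coe.mp ha)
        by_cases hinlt : Sum.inl t ∈ D'
        · exact hpair s t hts.symm hE' t (hmemD s t hinlt) s (hmemW s hwD)
            hts.ne (hd1 hts)
        · -- inl t ∉ D', inl s ∉ D', inr w ∈ D'; use the third vertex z
          obtain ⟨z, hzu, hzv, hzadj⟩ := hz
          have hzt : z ≠ t ∧ z ≠ s := by
            rcases Sym2.eq_iff.mp hE with ⟨h1, h2⟩ | ⟨h1, h2⟩
            · exact ⟨h1 ▸ hzu, h2 ▸ hzv⟩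
            · exact ⟨h1 ▸ hzv, h2 ▸ hzu⟩
          have hzts : G.Adj z t ∨ G.Adj z s := by
            rcases Sym2.eq_iff.mp hE with ⟨h1, h2⟩ | ⟨h1, h2⟩
            · rcases hzadj with h' | h'
              · exact Or.inl (h1 ▸ h')
              · exact Or.inr (h2 ▸ h')
            · rcases hzadj with h' | h'
              · exact Or.inr (h2 ▸ h')
              · exact Or.inl (h1 ▸ h')
          -- generic sub-argument, for (t, centered) with z adjacent
          have hside : ∀ t' s' : V, G.Adj t' s' → s(t', s') = s(u, v) →
              Sum.inl t' ∉ D' → G.Adj z t' → z ≠ t' → t' ∈ Dt t' → False := by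
            intro t' s' hts' hE'' hinlt' hzt' hzne ht'D
            by_cases hzD : Sum.inl z ∈ D'
            · exact hpair t' s' hts' hE'' z (hmemD t' z hzD) t' ht'D hzne (hd1 hzt')
            · have hinlz : Sum.inl z ∉ (↑D' : Set (V ⊕ {e : Sym2 V // e ∈ F})) := fun h =>
                hzD (Finset.mem_coe.mp h)
              obtain ⟨a', ha', hadj'⟩ := hdom' _ hinlz
              cases a' with
              | inl x' =>
                have hx'z : G.Adj x' z := (subdiv_adj_inl_inl.mp hadj').1
                have hx't : x' ≠ t' := fun hh => hinlt' (hh ▸ (Finset.mem_coe.mp ha'))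
                exact hpair t' s' hts' hE'' x' (hmemD t' x' (Finset.mem_coe.mp ha'))
                  t' ht'D hx't (hd2 hx'z hzt')
              | inr e' =>
                have hzmem : z ∈ s(u, v) := by
                  rw [← hW e']
                  exact subdiv_adj_inl_inr.mp hadj'.symm
                rcases Sym2.mem_iff.mp hzmem with hh | hh
                · exact hzu hh
                · exact hzv hh
          rcases hzts with h' | h'
          · exact hside t s hts hE hinlt h' hzt.1 htD
          · exact hside s t hts.symm hE' hinls h' hzt.2 (hmemW s hwD)
  -- start the case analysis: who dominates w?
  by_cases hwD : Sum.inr w ∈ D'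
  · exact hcenter u v huv rfl (hmemW u hwD)
  · have hinlw : Sum.inr w ∉ (↑D' : Set (V ⊕ {e : Sym2 V // e ∈ F})) := fun h =>
      hwD (Finset.mem_coe.mp h)
    obtain ⟨a, ha, hadj⟩ := hdom' _ hinlw
    cases a with
    | inl x =>
      have hxmem : x ∈ s(u, v) := by
        have := subdiv_adj_inl_inr.mp hadj
        rwa [hW w] at this
      rcases Sym2.mem_iff.mp hxmem with rfl | rfl
      · exact hcenter x v huv rfl (hmemD x x (Finset.mem_coe.mp ha))
      · exact hcenter x u huv.symm Sym2.eq_swap (hmemD x x (Finset.mem_coe.mp ha))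
    | inr e =>
      rw [hWw e] at hadj
      exact (G.subdiv F).loopless.irrefl _ hadj


lemma forward_aux [Fintype V] (G : SimpleGraph V) (hconn : G.Connected)
    (hcrit : ∀ F : Finset (Sym2 V), ↑F ⊆ G.edgeSet → F.card = 1 →
      G.domNum < (G.subdiv F).domNum)
    (D : Finset V) (hdomD : G.IsDomSet ↑D) (hcardD : D.card = G.domNum)
    {x y : V} (hx : x ∈ D) (hy : y ∈ D) (hxy : x ≠ y) : 2 < G.dist x y := by
  classical
  by_contra hnd
  push_neg at hnd
  -- main contradiction machine
  have main : ∀ z : V, G.Adj x z → (z ∈ D ∨ ∃ c ∈ D, G.Adj c z ∧ c ≠ x) → False := by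
    intro z hxz hz
    have hFsub : ↑({s(x, z)} : Finset (Sym2 V)) ⊆ G.edgeSet := by
      intro e he
      simp only [Finset.coe_singleton, Set.mem_singleton_iff] at he
      rw [he]
      exact hxz
    have hlt := hcrit {s(x, z)} hFsub (Finset.card_singleton _)
    have hdommap : (G.subdiv {s(x, z)}).IsDomSet
        ↑(D.image (Sum.inl : V → V ⊕ {e : Sym2 V // e ∈ ({s(x, z)} : Finset (Sym2 V))})) := by
      rintro (v₀ | e) hv₀
      · have hv₀D : v₀ ∉ D := fun h =>
          hv₀ (Finset.mem_coe.mpr (Finset.mem_image.mpr ⟨v₀, h, rfl⟩))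
        by_cases hvz : v₀ = z
        · subst hvz
          obtain ⟨c, hc, hcz, hcx⟩ := hz.resolve_left hv₀D
          refine ⟨Sum.inl c, Finset.mem_coe.mpr (Finset.mem_image.mpr ⟨c, hc, rfl⟩),
            subdiv_adj_inl_inl.mpr ⟨hcz, ?_⟩⟩
          simp only [Finset.mem_singleton]
          intro hEq
          rcases Sym2.eq_iff.mp hEq with ⟨h1, -⟩ | ⟨-, h2⟩
          · exact hcx h1
          · exact hxz.ne h2.symm
        · obtain ⟨c, hc, hcv⟩ := hdomD v₀ (fun h => hv₀D (Finset.mem_coe.mp h))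
          refine ⟨Sum.inl c, Finset.mem_coe.mpr (Finset.mem_image.mpr ⟨c, hc, rfl⟩),
            subdiv_adj_inl_inl.mpr ⟨hcv, ?_⟩⟩
          simp only [Finset.mem_singleton]
          intro hEq
          rcases Sym2.eq_iff.mp hEq with ⟨-, h2⟩ | ⟨-, h2⟩
          · exact hvz h2
          · exact hv₀D (h2 ▸ hx)
      · refine ⟨Sum.inl x, Finset.mem_coe.mpr (Finset.mem_image.mpr ⟨x, hx, rfl⟩),
          subdiv_adj_inl_inr.mpr ?_⟩
        have he : (e : Sym2 V) = s(x, z) := Finset.mem_singleton.mp e.2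
        rw [he]
        exact Sym2.mem_mk_left x z
    have hle2 : (G.subdiv {s(x, z)}).domNum ≤ D.card := by
      calc (G.subdiv {s(x, z)}).domNum
          ≤ (D.image (Sum.inl : V → V ⊕ {e : Sym2 V // e ∈ ({s(x, z)} : Finset (Sym2 V))})).card :=
            domNum_le _ _ hdommap
        _ = D.card := Finset.card_image_of_injective _ Sum.inl_injective
    rw [hcardD] at hle2
    omega
  -- get a short walk realizing the distance
  have hdne : G.dist x y ≠ 0 := Nat.pos_iff_ne_zero.mp (hconn.pos_dist_of_ne hxy)
  obtain ⟨p, hp⟩ := hconn.exists_walk_length_eq_dist x y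
  have hplen : p.length ≤ 2 := le_of_le_of_eq (le_of_eq hp) rfl |>.trans hnd
  cases p with
  | nil => exact hxy rfl
  | cons h q =>
    cases q with
    | nil => exact main y h (Or.inl hy)
    | cons h' q' =>
      cases q' with
      | nil => exact main _ h (Or.inr ⟨y, hy, h'.symm, Ne.symm hxy⟩)
      | cons h'' q'' =>
        simp only [Walk.length_cons] at hplen
        omega

end SimpleGraph

theorem stmt6 {V : Type*} [Fintype V] (G : SimpleGraph V) (hconn : G.Connected)
    (hcard : 3 ≤ Fintype.card V) :
    G.IsQCritical 1 ↔
      ∀ D : Finset V, G.IsDomSet ↑D → D.card = G.domNum →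
        ∀ x ∈ D, ∀ y ∈ D, x ≠ y → 2 < G.dist x y := by
  constructor
  · intro hcrit D hdom hcardD x hx y hy hxy
    exact SimpleGraph.forward_aux G hconn hcrit.1 D hdom hcardD hx hy hxy
  · intro hpack
    refine ⟨?_, ⟨∅, by simp, by simp, SimpleGraph.domNum_subdiv_empty G⟩⟩
    intro F hFsub hF1
    obtain ⟨e, rfl⟩ := Finset.card_eq_one.mp hF1
    by_contra hlt
    push_neg at hlt
    revert hFsub hlt
    induction e using Sym2.ind with
    | _ u v =>
      intro hFsub hlt
      have huv : G.Adj u v := G.mem_edgeSet.mp (hFsub (by simp))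
      exact SimpleGraph.key G hconn hcard hpack u v huv hlt
end

section
/- Let T be the k-wounded spider S_{t,t−k} obtained from the star K_{1,t} (t ≥ 2, 1 ≤ k ≤ t−1) by subdividing exactly t−k of its edges. Then T is γ-q-critical with q = n(T) − k, where n(T) = 2t − k + 1 is the order of T. -/
open SimpleGraph

namespace Wound

lemma subdiv_adj_ll {V : Type*} (G : SimpleGraph V) (F : Finset (Sym2 V)) (u v : V) :
    (G.subdiv F).Adj (Sum.inl u) (Sum.inl v) ↔ G.Adj u v ∧ s(u,v) ∉ F := by
  constructor
  · rintro ⟨hne, h | h⟩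
    · exact h
    · have h' : G.Adj v u ∧ s(v,u) ∉ F := h
      exact ⟨h'.1.symm, by rw [Sym2.eq_swap]; exact h'.2⟩
  · intro h
    exact ⟨by simp [h.1.ne], Or.inl h⟩

lemma subdiv_adj_lr {V : Type*} (G : SimpleGraph V) (F : Finset (Sym2 V)) (u : V)
    (e : {e : Sym2 V // e ∈ F}) :
    (G.subdiv F).Adj (Sum.inl u) (Sum.inr e) ↔ u ∈ e.val := by
  constructor
  · rintro ⟨hne, h | h⟩
    · exact h
    · exact h.elim
  · intro h
    exact ⟨by simp, Or.inl h⟩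

lemma subdiv_adj_rl {V : Type*} (G : SimpleGraph V) (F : Finset (Sym2 V)) (u : V)
    (e : {e : Sym2 V // e ∈ F}) :
    (G.subdiv F).Adj (Sum.inr e) (Sum.inl u) ↔ u ∈ e.val := by
  rw [SimpleGraph.adj_comm]; exact subdiv_adj_lr G F u e

lemma subdiv_adj_rr {V : Type*} (G : SimpleGraph V) (F : Finset (Sym2 V))
    (e e' : {e : Sym2 V // e ∈ F}) :
    ¬ (G.subdiv F).Adj (Sum.inr e) (Sum.inr e') := by
  rintro ⟨hne, h | h⟩ <;> exact h

/-- every subdivision edge `s(a,b)` in the edge set comes from a case. -/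
lemma subdiv_edge_cases {V : Type*} (G : SimpleGraph V) (F : Finset (Sym2 V))
    {e'' : Sym2 (V ⊕ {e : Sym2 V // e ∈ F})} (h : e'' ∈ (G.subdiv F).edgeSet) :
    (∃ u v, e'' = s(Sum.inl u, Sum.inl v) ∧ G.Adj u v ∧ s(u,v) ∉ F) ∨
    (∃ u, ∃ e : {e : Sym2 V // e ∈ F}, e'' = s(Sum.inl u, Sum.inr e) ∧ u ∈ e.val) := by
  induction e'' using Sym2.ind with
  | _ a b =>
    rw [SimpleGraph.mem_edgeSet] at h
    match a, b with
    | Sum.inl u, Sum.inl v =>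
      rw [subdiv_adj_ll] at h
      exact Or.inl ⟨u, v, rfl, h⟩
    | Sum.inl u, Sum.inr e =>
      rw [subdiv_adj_lr] at h
      exact Or.inr ⟨u, e, rfl, h⟩
    | Sum.inr e, Sum.inl u =>
      rw [subdiv_adj_rl] at h
      exact Or.inr ⟨u, e, by rw [Sym2.eq_swap], h⟩
    | Sum.inr e, Sum.inr e' => exact absurd h (subdiv_adj_rr G F e e')

lemma domNum_le {V : Type*} [Fintype V] (G : SimpleGraph V) (D : Finset V)
    (h : G.IsDomSet ↑D) : G.domNum ≤ D.card :=
  Nat.sInf_le ⟨D, rfl, h⟩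

lemma le_domNum {V : Type*} [Fintype V] (G : SimpleGraph V) (m : ℕ)
    (h : ∀ D : Finset V, G.IsDomSet ↑D → m ≤ D.card) : m ≤ G.domNum := by
  apply le_csInf
  · exact ⟨(Finset.univ : Finset V).card, Finset.univ, rfl, by intro v hv; simp at hv⟩
  · rintro n ⟨D, rfl, hD⟩
    exact h D hD

/-- Counting lemma: disjoint trap sets. -/
lemma dom_card_lower {V ι : Type*} (G : SimpleGraph V) (D : Finset V) (hD : G.IsDomSet ↑D)
    (s : Finset ι) (w : ι → V) (A : ι → Set V)
    (hw : ∀ i ∈ s, ∀ u ∈ D, (u = w i ∨ G.Adj u (w i)) → u ∈ A i)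
    (hdisj : ∀ i ∈ s, ∀ j ∈ s, i ≠ j → Disjoint (A i) (A j)) :
    s.card ≤ D.card := by
  classical
  have key : ∀ i : ι, ∃ u : V, i ∈ s → u ∈ D ∧ u ∈ A i := by
    intro i
    by_cases hi : i ∈ s
    · by_cases h : w i ∈ D
      · exact ⟨w i, fun _ => ⟨h, hw i hi _ h (Or.inl rfl)⟩⟩
      · obtain ⟨u, hu, hadj⟩ := hD (w i) h
        exact ⟨u, fun _ => ⟨hu, hw i hi u hu (Or.inr hadj)⟩⟩
    · exact ⟨w i, fun h => absurd h hi⟩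
  choose f hf using key
  apply Finset.card_le_card_of_injOn f (fun i hi => (hf i hi).1)
  intro i hi j hj hij
  by_contra hne
  exact Set.disjoint_left.mp (hdisj i hi j hj hne) (hf i hi).2 (hij ▸ (hf j hj).2)

/-- Counting lemma with an extra vertex `c ∈ D` avoiding all traps. -/
lemma dom_card_lower' {V ι : Type*} (G : SimpleGraph V) (D : Finset V) (hD : G.IsDomSet ↑D)
    (s : Finset ι) (w : ι → V) (A : ι → Set V)
    (hw : ∀ i ∈ s, ∀ u ∈ D, (u = w i ∨ G.Adj u (w i)) → u ∈ A i)
    (hdisj : ∀ i ∈ s, ∀ j ∈ s, i ≠ j → Disjoint (A i) (A j))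
    (c : V) (hc : c ∈ D) (hcA : ∀ i ∈ s, c ∉ A i) :
    s.card + 1 ≤ D.card := by
  classical
  have key : ∀ i : ι, ∃ u : V, i ∈ s → u ∈ D.erase c ∧ u ∈ A i := by
    intro i
    by_cases hi : i ∈ s
    · by_cases h : w i ∈ D
      · refine ⟨w i, fun _ => ⟨?_, hw i hi _ h (Or.inl rfl)⟩⟩
        refine Finset.mem_erase.mpr ⟨?_, h⟩
        rintro rfl; exact hcA i hi (hw i hi _ h (Or.inl rfl))
      · obtain ⟨u, hu, hadj⟩ := hD (w i) h
        refine ⟨u, fun _ => ⟨?_, hw i hi u hu (Or.inr hadj)⟩⟩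
        refine Finset.mem_erase.mpr ⟨?_, hu⟩
        rintro rfl; exact hcA i hi (hw i hi _ hu (Or.inr hadj))
    · exact ⟨w i, fun h => absurd h hi⟩
  choose f hf using key
  have h1 : s.card ≤ (D.erase c).card := by
    apply Finset.card_le_card_of_injOn f (fun i hi => (hf i hi).1)
    intro i hi j hj hij
    by_contra hne
    exact Set.disjoint_left.mp (hdisj i hi j hj hne) (hf i hi).2 (hij ▸ (hf j hj).2)
  have h2 : (D.erase c).card = D.card - 1 := Finset.card_erase_of_mem hc
  have h3 : 1 ≤ D.card := Finset.card_pos.mpr ⟨c, hc⟩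
  omega

section StarStuff

variable {t : ℕ}

abbrev V0 (t : ℕ) := Fin 1 ⊕ Fin t

lemma star_edge {e : Sym2 (V0 t)}
    (h : e ∈ (completeBipartiteGraph (Fin 1) (Fin t)).edgeSet) :
    ∃ i : Fin t, e = s(Sum.inl 0, Sum.inr i) := by
  induction e using Sym2.ind with
  | _ a b =>
    rw [SimpleGraph.mem_edgeSet] at h
    match a, b with
    | Sum.inl a, Sum.inr i =>
      exact ⟨i, by rw [Subsingleton.elim a 0]⟩
    | Sum.inr i, Sum.inl a =>
      exact ⟨i, by rw [Subsingleton.elim a 0, Sym2.eq_swap]⟩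
    | Sum.inl a, Sum.inl b => simp at h
    | Sum.inr a, Sum.inr b => simp at h

lemma mem_star_edge (i : Fin t) (v : V0 t) :
    v ∈ (s(Sum.inl 0, Sum.inr i) : Sym2 (V0 t)) ↔ v = Sum.inl 0 ∨ v = Sum.inr i := by
  rw [Sym2.mem_iff]

variable {F : Finset (Sym2 (V0 t))}

lemma leaf_unique (hF : ↑F ⊆ (completeBipartiteGraph (Fin 1) (Fin t)).edgeSet)
    {e : Sym2 (V0 t)} (he : e ∈ F) {i j : Fin t}
    (hi : Sum.inr i ∈ e) (hj : Sum.inr j ∈ e) : i = j := by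
  obtain ⟨i0, rfl⟩ := star_edge (hF he)
  rw [mem_star_edge] at hi hj
  rcases hi with h | h <;> rcases hj with h' | h' <;> simp_all

lemma center_mem (hF : ↑F ⊆ (completeBipartiteGraph (Fin 1) (Fin t)).edgeSet)
    {e : Sym2 (V0 t)} (he : e ∈ F) : (Sum.inl 0 : V0 t) ∈ e := by
  obtain ⟨i0, rfl⟩ := star_edge (hF he)
  rw [mem_star_edge]; exact Or.inl rfl

lemma exists_leaf (hF : ↑F ⊆ (completeBipartiteGraph (Fin 1) (Fin t)).edgeSet)
    {e : Sym2 (V0 t)} (he : e ∈ F) : ∃ i : Fin t, Sum.inr i ∈ e := by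
  obtain ⟨i0, rfl⟩ := star_edge (hF he)
  exact ⟨i0, by rw [mem_star_edge]; exact Or.inr rfl⟩

abbrev V1 (F : Finset (Sym2 (V0 t))) := V0 t ⊕ {e : Sym2 (V0 t) // e ∈ F}

abbrev TT (F : Finset (Sym2 (V0 t))) : SimpleGraph (V1 F) :=
  (completeBipartiteGraph (Fin 1) (Fin t)).subdiv F

/-- classification of edges of `TT F`. -/
lemma Tedge_cases (hF : ↑F ⊆ (completeBipartiteGraph (Fin 1) (Fin t)).edgeSet)
    {e'' : Sym2 (V1 F)} (h : e'' ∈ (TT F).edgeSet) :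
    (∃ i : Fin t, e'' = s(Sum.inl (Sum.inl 0), Sum.inl (Sum.inr i)) ∧
        s((Sum.inl 0 : V0 t), Sum.inr i) ∉ F) ∨
    (∃ e : {e : Sym2 (V0 t) // e ∈ F}, e'' = s(Sum.inl (Sum.inl 0), Sum.inr e)) ∨
    (∃ i : Fin t, ∃ e : {e : Sym2 (V0 t) // e ∈ F}, Sum.inr i ∈ e.val ∧
        e'' = s(Sum.inl (Sum.inr i), Sum.inr e)) := by
  rcases subdiv_edge_cases _ _ h with ⟨u, v, rfl, hadj, hnF⟩ | ⟨u, e, rfl, hue⟩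
  · obtain ⟨i, he⟩ :=
      star_edge (((completeBipartiteGraph (Fin 1) (Fin t)).mem_edgeSet).mpr hadj)
    rw [Sym2.eq_iff] at he
    rcases he with ⟨rfl, rfl⟩ | ⟨rfl, rfl⟩
    · exact Or.inl ⟨i, rfl, hnF⟩
    · rw [Sym2.eq_swap] at hnF
      exact Or.inl ⟨i, by rw [Sym2.eq_swap], hnF⟩
  · obtain ⟨i0, he⟩ := star_edge (hF e.prop)
    have := hue
    rw [he, mem_star_edge] at this
    rcases this with rfl | rfl
    · exact Or.inr (Or.inl ⟨e, rfl⟩)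
    · exact Or.inr (Or.inr ⟨i0, e, hue, rfl⟩)

end StarStuff
section Leg

variable {t : ℕ} {F : Finset (Sym2 (V0 t))}

abbrev V2 (F' : Finset (Sym2 (V1 F))) := V1 F ⊕ {e : Sym2 (V1 F) // e ∈ F'}

abbrev GG (F' : Finset (Sym2 (V1 F))) : SimpleGraph (V2 F') := (TT F).subdiv F'

/-- the center of the spider, at level 2 -/
abbrev c2 (F' : Finset (Sym2 (V1 F))) : V2 F' := Sum.inl (Sum.inl (Sum.inl 0))
/-- the leaf of leg `i`, at level 2 -/
abbrev L2 (F' : Finset (Sym2 (V1 F))) (i : Fin t) : V2 F' := Sum.inl (Sum.inl (Sum.inr i))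
/-- the level-1 subdivision vertex of `e ∈ F`, at level 2 -/
abbrev M2 (F' : Finset (Sym2 (V1 F))) (e : {e : Sym2 (V0 t) // e ∈ F}) : V2 F' :=
  Sum.inl (Sum.inr e)

/-- `v` belongs to the leg through leaf `i` (the center belongs to no leg). -/
def Leg (F' : Finset (Sym2 (V1 F))) (i : Fin t) : V2 F' → Prop
  | Sum.inl (Sum.inl (Sum.inl _)) => False
  | Sum.inl (Sum.inl (Sum.inr j)) => j = i
  | Sum.inl (Sum.inr e) => Sum.inr i ∈ e.val
  | Sum.inr e'' => Sum.inl (Sum.inr i) ∈ e''.val ∨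
      ∃ e : {e : Sym2 (V0 t) // e ∈ F}, (Sum.inr e : V1 F) ∈ e''.val ∧ Sum.inr i ∈ e.val

variable {F' : Finset (Sym2 (V1 F))}
variable (hF : ↑F ⊆ (completeBipartiteGraph (Fin 1) (Fin t)).edgeSet)
variable (hF' : ↑F' ⊆ (TT F).edgeSet)

include hF hF' in
lemma leg_sub_unique {e'' : Sym2 (V1 F)} (h'' : e'' ∈ F') {i j : Fin t}
    (hi : Sum.inl (Sum.inr i) ∈ e'' ∨
      ∃ e : {e : Sym2 (V0 t) // e ∈ F}, (Sum.inr e : V1 F) ∈ e'' ∧ Sum.inr i ∈ e.val)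
    (hj : Sum.inl (Sum.inr j) ∈ e'' ∨
      ∃ e : {e : Sym2 (V0 t) // e ∈ F}, (Sum.inr e : V1 F) ∈ e'' ∧ Sum.inr j ∈ e.val) :
    i = j := by
  rcases Tedge_cases hF (hF' h'') with ⟨i0, rfl, _⟩ | ⟨e0, rfl⟩ | ⟨i0, e0, hie, rfl⟩
  · rcases hi with hi | ⟨e, he, _⟩
    · rcases hj with hj | ⟨e', he', _⟩
      · rw [Sym2.mem_iff] at hi hj
        rcases hi with hi | hi <;> rcases hj with hj | hj <;> simp_all
      · rw [Sym2.mem_iff] at he'; rcases he' with h | h <;> simp_all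
    · rw [Sym2.mem_iff] at he; rcases he with h | h <;> simp_all
  · rcases hi with hi | ⟨e, he, hie⟩
    · rw [Sym2.mem_iff] at hi; rcases hi with h | h <;> simp_all
    · rcases hj with hj | ⟨e', he', hje⟩
      · rw [Sym2.mem_iff] at hj; rcases hj with h | h <;> simp_all
      · rw [Sym2.mem_iff] at he he'
        have he2 : e = e0 := by rcases he with h | h <;> simp only [Sum.inr.injEq, reduceCtorEq] at h <;> exact h
        have he2' : e' = e0 := by rcases he' with h | h <;> simp only [Sum.inr.injEq, reduceCtorEq] at h <;> exact h
        rw [he2] at hie; rw [he2'] at hje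
        exact leaf_unique hF e0.prop hie hje
  · have key : ∀ m : Fin t, (Sum.inl (Sum.inr m) ∈
        (s(Sum.inl (Sum.inr i0), Sum.inr e0) : Sym2 (V1 F)) ∨
        ∃ e : {e : Sym2 (V0 t) // e ∈ F},
          (Sum.inr e : V1 F) ∈ (s(Sum.inl (Sum.inr i0), Sum.inr e0) : Sym2 (V1 F)) ∧
          Sum.inr m ∈ e.val) → m = i0 := by
      intro m hm
      rcases hm with hm | ⟨e, he, hme⟩
      · rw [Sym2.mem_iff] at hm; rcases hm with h | h <;> simp_all
      · rw [Sym2.mem_iff] at he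
        have he2 : e = e0 := by rcases he with h | h <;> simp only [Sum.inr.injEq, reduceCtorEq] at h <;> exact h
        rw [he2] at hme
        exact leaf_unique hF e0.prop hme hie
    rw [key i hi, key j hj]

include hF hF' in
lemma leg_unique {i j : Fin t} {v : V2 F'} (hi : Leg F' i v) (hj : Leg F' j v) : i = j := by
  match v with
  | Sum.inl (Sum.inl (Sum.inl _)) => exact hi.elim
  | Sum.inl (Sum.inl (Sum.inr m)) =>
      simp only [Leg] at hi hj; rw [← hi, ← hj]
  | Sum.inl (Sum.inr e) =>
      exact leaf_unique hF e.prop hi hj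
  | Sum.inr e'' =>
      exact leg_sub_unique hF hF' e''.prop hi hj

end Leg
section Inv

variable {t : ℕ} {F : Finset (Sym2 (V0 t))} {F' : Finset (Sym2 (V1 F))}

/-- any dominator of the leaf `L2 i` is the center or lies in leg `i`. -/
lemma dom_leaf {i : Fin t} {u : V2 F'}
    (h : u = L2 F' i ∨ (GG F').Adj u (L2 F' i)) :
    u = c2 F' ∨ Leg F' i u := by
  match u with
  | Sum.inl (Sum.inl (Sum.inl a)) =>
      exact Or.inl (by rw [Subsingleton.elim a 0])
  | Sum.inl (Sum.inl (Sum.inr j)) =>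
      rcases h with h | h
      · refine Or.inr ?_
        have : j = i := by simpa using h
        exact this
      · rw [subdiv_adj_ll] at h
        rw [subdiv_adj_ll] at h
        simp at h
  | Sum.inl (Sum.inr e) =>
      rcases h with h | h
      · simp at h
      · rw [subdiv_adj_ll, subdiv_adj_rl] at h
        exact Or.inr h.1
  | Sum.inr e'' =>
      rcases h with h | h
      · simp at h
      · rw [subdiv_adj_rl] at h
        exact Or.inr (Or.inl h)

/-- if leg `i` is wounded or its first edge is subdivided, center is not adjacent to `L2 i`. -/
lemma not_adj_c2_L2 {i : Fin t}
    (h : s((Sum.inl 0 : V0 t), Sum.inr i) ∈ F ∨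
      s((Sum.inl (Sum.inl 0) : V1 F), Sum.inl (Sum.inr i)) ∈ F') :
    ¬ (GG F').Adj (c2 F') (L2 F' i) := by
  rw [subdiv_adj_ll, subdiv_adj_ll]
  rintro ⟨⟨_, h2⟩, h3⟩
  rcases h with h | h
  · exact h2 h
  · exact h3 h

/-- any dominator of a level-2 subdivision vertex is itself or an endpoint of its edge. -/
lemma dom_sub {e'' : {e : Sym2 (V1 F) // e ∈ F'}} {u : V2 F'}
    (h : u = Sum.inr e'' ∨ (GG F').Adj u (Sum.inr e'')) :
    u = Sum.inr e'' ∨ ∃ v : V1 F, u = Sum.inl v ∧ v ∈ e''.val := by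
  match u with
  | Sum.inl v =>
      rcases h with h | h
      · simp at h
      · rw [subdiv_adj_lr] at h
        exact Or.inr ⟨v, rfl, h⟩
  | Sum.inr e2 =>
      rcases h with h | h
      · exact Or.inl h
      · exact absurd h (subdiv_adj_rr _ _ _ _)

/-- if the second edge of a wounded leg is subdivided, `M2 e` is not adjacent to the leaf. -/
lemma not_adj_M2_L2 {i : Fin t} {e : {e : Sym2 (V0 t) // e ∈ F}}
    (h : s((Sum.inl (Sum.inr i) : V1 F), Sum.inr e) ∈ F') :
    ¬ (GG F').Adj (M2 F' e) (L2 F' i) := by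
  rw [subdiv_adj_ll]
  rintro ⟨_, h3⟩
  rw [Sym2.eq_swap] at h
  exact h3 h

end Inv
section MainLower

variable {t : ℕ} {F : Finset (Sym2 (V0 t))} {F' : Finset (Sym2 (V1 F))}
variable (hF : ↑F ⊆ (completeBipartiteGraph (Fin 1) (Fin t)).edgeSet)
variable (hF' : ↑F' ⊆ (TT F).edgeSet)

include hF in
lemma eq_of_mem_leaf {e : Sym2 (V0 t)} (he : e ∈ F) {i : Fin t}
    (hi : Sum.inr i ∈ e) : e = s(Sum.inl 0, Sum.inr i) := by
  obtain ⟨i0, rfl⟩ := star_edge (hF he)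
  rw [mem_star_edge] at hi
  rcases hi with h | h <;> simp_all

include hF hF' in
lemma sub_mem_inr_unique {e'' : Sym2 (V1 F)} (h'' : e'' ∈ F')
    {e e' : {e : Sym2 (V0 t) // e ∈ F}}
    (h1 : (Sum.inr e : V1 F) ∈ e'') (h2 : (Sum.inr e' : V1 F) ∈ e'') : e = e' := by
  rcases Tedge_cases hF (hF' h'') with ⟨i0, rfl, _⟩ | ⟨e0, rfl⟩ | ⟨i0, e0, hie, rfl⟩
  · rw [Sym2.mem_iff] at h1; rcases h1 with h | h <;> simp_all
  · rw [Sym2.mem_iff] at h1 h2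
    have : e = e0 := by rcases h1 with h | h <;> simp only [Sum.inr.injEq, reduceCtorEq] at h <;> exact h
    have : e' = e0 := by rcases h2 with h | h <;> simp only [Sum.inr.injEq, reduceCtorEq] at h <;> exact h
    simp_all
  · rw [Sym2.mem_iff] at h1 h2
    have : e = e0 := by rcases h1 with h | h <;> simp only [Sum.inr.injEq, reduceCtorEq] at h <;> exact h
    have : e' = e0 := by rcases h2 with h | h <;> simp only [Sum.inr.injEq, reduceCtorEq] at h <;> exact h
    simp_all

include hF hF' in
lemma sub_not_three {e'' : Sym2 (V1 F)} (h'' : e'' ∈ F') {i : Fin t}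
    {e : {e : Sym2 (V0 t) // e ∈ F}} (h1 : (Sum.inl (Sum.inl 0) : V1 F) ∈ e'')
    (h2 : (Sum.inl (Sum.inr i) : V1 F) ∈ e'') (h3 : (Sum.inr e : V1 F) ∈ e'') : False := by
  rcases Tedge_cases hF (hF' h'') with ⟨i0, rfl, _⟩ | ⟨e0, rfl⟩ | ⟨i0, e0, hie, rfl⟩
  · rw [Sym2.mem_iff] at h3; rcases h3 with h | h <;> simp_all
  · rw [Sym2.mem_iff] at h2; rcases h2 with h | h <;> simp_all
  · rw [Sym2.mem_iff] at h1; rcases h1 with h | h <;> simp_all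

include hF hF' in
/-- Lower bound when the center is in the dominating set. -/
lemma lower_center (D : Finset (V2 F')) (hD : (GG F').IsDomSet ↑D)
    (hc : c2 F' ∈ D) (I : Finset (Fin t))
    (hI : ∀ i ∈ I, s((Sum.inl 0 : V0 t), Sum.inr i) ∈ F ∨
        s((Sum.inl (Sum.inl 0) : V1 F), Sum.inl (Sum.inr i)) ∈ F') :
    I.card + 1 ≤ D.card := by
  apply dom_card_lower' (GG F') D hD I (fun i => L2 F' i) (fun i => {v | Leg F' i v})
    ?_ ?_ (c2 F') hc ?_
  · intro i hi u _ h
    rcases dom_leaf h with rfl | hleg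
    · exfalso
      rcases h with h | h
      · exact absurd h (by simp)
      · exact not_adj_c2_L2 (hI i hi) h
    · exact hleg
  · intro i _ j _ hne
    rw [Set.disjoint_left]
    intro v hv hv'
    exact hne (leg_unique hF hF' hv hv')
  · intro i _ h
    exact h

include hF hF' in
/-- Lower bound when the center is not in the dominating set. -/
lemma lower_nocenter (D : Finset (V2 F')) (hD : (GG F').IsDomSet ↑D)
    (hc : c2 F' ∉ D) (J : Finset {e : Sym2 (V0 t) // e ∈ F})
    (hJ : ∀ e ∈ J, s((Sum.inl (Sum.inl 0) : V1 F), (Sum.inr e : V1 F)) ∈ F' ∧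
       ∀ i : Fin t, Sum.inr i ∈ e.val → s((Sum.inl (Sum.inr i) : V1 F), Sum.inr e) ∈ F') :
    t + J.card ≤ D.card := by
  classical
  -- index set
  set s : Finset (Fin t ⊕ {e : Sym2 (V0 t) // e ∈ F}) := Finset.univ.disjSum J with hs
  -- witnesses
  set w : (Fin t ⊕ {e : Sym2 (V0 t) // e ∈ F}) → V2 F' := Sum.elim (fun i => L2 F' i)
    (fun e => if h : s((Sum.inl (Sum.inl 0) : V1 F), (Sum.inr e : V1 F)) ∈ F'
      then Sum.inr ⟨_, h⟩ else c2 F') with hw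
  -- far condition for a leg
  set Fc : Fin t → Prop := fun i => ∃ e : {e : Sym2 (V0 t) // e ∈ F},
      Sum.inr i ∈ e.val ∧ s((Sum.inl (Sum.inr i) : V1 F), (Sum.inr e : V1 F)) ∈ F' with hFc
  set A : (Fin t ⊕ {e : Sym2 (V0 t) // e ∈ F}) → Set (V2 F') := Sum.elim
    (fun i => {v | Leg F' i v ∧ (Fc i → (v = L2 F' i ∨
        ∃ (e'' : Sym2 (V1 F)) (h'' : e'' ∈ F'), v = Sum.inr ⟨e'', h''⟩ ∧
          (Sum.inl (Sum.inr i) : V1 F) ∈ e''))})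
    (fun e => {v | v = M2 F' e ∨ ∃ (e'' : Sym2 (V1 F)) (h'' : e'' ∈ F'),
        v = Sum.inr ⟨e'', h''⟩ ∧ (Sum.inr e : V1 F) ∈ e'' ∧
          (Sum.inl (Sum.inl 0) : V1 F) ∈ e''}) with hA
  have hcard : s.card = t + J.card := by
    simp [hs, Finset.card_disjSum]
  rw [← hcard]
  apply dom_card_lower (GG F') D hD s w A ?_ ?_
  · -- witnesses trapped
    rintro (i | e) hmem u hu h
    · -- leaf witnesses
      simp only [hw, Sum.elim_inl] at h
      rcases dom_leaf h with rfl | hleg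
      · exact absurd hu hc
      · refine ⟨hleg, ?_⟩
        rintro ⟨e, hie, heB⟩
        match u, hleg with
        | Sum.inl (Sum.inl (Sum.inr j)), hleg =>
            have : j = i := hleg
            subst this
            exact Or.inl rfl
        | Sum.inl (Sum.inr e2), hleg =>
            exfalso
            have he2 : e2 = e := by
              apply Subtype.ext
              rw [eq_of_mem_leaf hF e2.prop hleg, eq_of_mem_leaf hF e.prop hie]
            subst he2
            rcases h with h | h
            · simp at h
            · exact not_adj_M2_L2 heB h
        | Sum.inr e'', hleg =>
            refine Or.inr ⟨e''.val, e''.prop, rfl, ?_⟩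
            rcases h with h | h
            · simp at h
            · rw [subdiv_adj_rl] at h
              exact h
    · -- subdivision witnesses
      have heJ := hJ e (Finset.mem_disjSum.mp hmem |>.elim
        (fun ⟨a, _, hab⟩ => absurd hab (by simp)) (fun ⟨b, hb, hab⟩ => by
          cases Sum.inr_injective hab; exact hb))
      simp only [hw, Sum.elim_inr, dif_pos heJ.1] at h
      rcases dom_sub h with rfl | ⟨v, rfl, hv⟩
      · exact Or.inr ⟨_, heJ.1, rfl, by rw [Sym2.mem_iff]; exact Or.inr rfl,
          by rw [Sym2.mem_iff]; exact Or.inl rfl⟩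
      · rw [Sym2.mem_iff] at hv
        rcases hv with rfl | rfl
        · exact absurd hu hc
        · exact Or.inl rfl
  · -- disjointness
    have hAleg : ∀ (e : {e : Sym2 (V0 t) // e ∈ F}) (i : Fin t), Sum.inr i ∈ e.val →
        ∀ v ∈ A (Sum.inr e), Leg F' i v := by
      intro e i hie v hv
      rcases hv with rfl | ⟨e'', h'', rfl, h1, _⟩
      · exact hie
      · exact Or.inr ⟨e, h1, hie⟩
    rintro (i | e) hi (j | e') hj hne
    · rw [Set.disjoint_left]
      intro v hv hv'
      exact hne (congrArg Sum.inl (leg_unique hF hF' hv.1 hv'.1))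
    · -- leg i vs extra of e'
      obtain ⟨ie, hie⟩ := exists_leaf hF e'.prop
      have heJ : e' ∈ J := (Finset.mem_disjSum.mp hj).elim
        (fun ⟨a, _, hab⟩ => absurd hab (by simp)) (fun ⟨b, hb, hab⟩ => by
          cases Sum.inr_injective hab; exact hb)
      rw [Set.disjoint_left]
      intro v hv hv'
      have : i = ie := leg_unique hF hF' hv.1 (hAleg e' ie hie v hv')
      subst this
      have hFci : Fc i := ⟨e', hie, (hJ e' heJ).2 i hie⟩
      rcases hv.2 hFci with rfl | ⟨e''1, h''1, rfl, hm1⟩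
      · rcases hv' with h | ⟨e'', h'', h1, _⟩
        · simp at h
        · simp at h1
      · rcases hv' with h | ⟨e''2, h''2, heq, hm2, hm3⟩
        · simp at h
        · have : e''1 = e''2 := by
            have := Sum.inr_injective heq
            exact congrArg Subtype.val this
          subst this
          exact sub_not_three hF hF' h''1 hm3 hm1 hm2
    · -- extra of e vs leg j (symmetric)
      obtain ⟨ie, hie⟩ := exists_leaf hF e.prop
      have heJ : e ∈ J := (Finset.mem_disjSum.mp hi).elim
        (fun ⟨a, _, hab⟩ => absurd hab (by simp)) (fun ⟨b, hb, hab⟩ => by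
          cases Sum.inr_injective hab; exact hb)
      rw [Set.disjoint_left]
      intro v hv hv'
      have : j = ie := leg_unique hF hF' hv'.1 (hAleg e ie hie v hv)
      subst this
      have hFcj : Fc j := ⟨e, hie, (hJ e heJ).2 j hie⟩
      rcases hv'.2 hFcj with rfl | ⟨e''1, h''1, rfl, hm1⟩
      · rcases hv with h | ⟨e'', h'', h1, _⟩
        · simp at h
        · simp at h1
      · rcases hv with h | ⟨e''2, h''2, heq, hm2, hm3⟩
        · simp at h
        · have : e''1 = e''2 := by
            have := Sum.inr_injective heq
            exact congrArg Subtype.val this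
          subst this
          exact sub_not_three hF hF' h''1 hm3 hm1 hm2
    · -- extra vs extra
      rw [Set.disjoint_left]
      intro v hv hv'
      rcases hv with rfl | ⟨e''1, h''1, rfl, hm1, _⟩
      · rcases hv' with h | ⟨e'', h'', h1, _⟩
        · have : e = e' := by simpa using h
          exact hne (by rw [this])
        · simp at h1
      · rcases hv' with h | ⟨e''2, h''2, heq, hm2, _⟩
        · simp at h
        · have : e''1 = e''2 := by
            have := Sum.inr_injective heq
            exact congrArg Subtype.val this
          subst this
          exact hne (congrArg Sum.inr (sub_mem_inr_unique hF hF' h''1 hm1 hm2))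

end MainLower
section LevelOne

variable {t : ℕ} {F : Finset (Sym2 (V0 t))}
variable (hF : ↑F ⊆ (completeBipartiteGraph (Fin 1) (Fin t)).edgeSet)

/-- the unique leaf index of a star edge -/
noncomputable def leafIdx (hF : ↑F ⊆ (completeBipartiteGraph (Fin 1) (Fin t)).edgeSet)
    (e : {e : Sym2 (V0 t) // e ∈ F}) : Fin t :=
  (exists_leaf hF e.prop).choose

lemma leafIdx_mem (e : {e : Sym2 (V0 t) // e ∈ F}) :
    Sum.inr (leafIdx hF e) ∈ e.val :=
  (exists_leaf hF e.prop).choose_spec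

include hF in
lemma leafIdx_eq {e : {e : Sym2 (V0 t) // e ∈ F}} {i : Fin t}
    (h : Sum.inr i ∈ e.val) : leafIdx hF e = i :=
  leaf_unique hF e.prop (leafIdx_mem hF e) h

include hF in
lemma val_eq_leafIdx (e : {e : Sym2 (V0 t) // e ∈ F}) :
    e.val = s(Sum.inl 0, Sum.inr (leafIdx hF e)) :=
  eq_of_mem_leaf hF e.prop (leafIdx_mem hF e)

include hF in
lemma leafIdx_injective : Function.Injective (leafIdx hF) := by
  intro e e' h
  apply Subtype.ext
  rw [val_eq_leafIdx hF e, val_eq_leafIdx hF e', h]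

lemma star_adj_inr {a : V0 t} {i : Fin t}
    (h : (completeBipartiteGraph (Fin 1) (Fin t)).Adj a (Sum.inr i)) : a = Sum.inl 0 := by
  match a with
  | Sum.inl a0 => rw [Subsingleton.elim a0 0]
  | Sum.inr j => simp at h

include hF in
/-- Lower bound for the domination number of the wounded spider itself. -/
lemma lowerT (htk : F.card + 1 ≤ t) (D : Finset (V1 F)) (hD : (TT F).IsDomSet ↑D) :
    F.card + 1 ≤ D.card := by
  classical
  by_cases hc : (Sum.inl (Sum.inl 0) : V1 F) ∈ D
  · have := dom_card_lower' (TT F) D hD (Finset.univ : Finset {e : Sym2 (V0 t) // e ∈ F})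
      (fun e => Sum.inl (Sum.inr (leafIdx hF e)))
      (fun e => {v : V1 F | v = Sum.inl (Sum.inr (leafIdx hF e)) ∨ v = Sum.inr e})
      ?_ ?_ (Sum.inl (Sum.inl 0)) hc ?_
    · simpa using this
    · intro e _ u _ h
      rcases h with rfl | h
      · exact Or.inl rfl
      · match u with
        | Sum.inl a =>
            rw [subdiv_adj_ll] at h
            exfalso
            have ha := star_adj_inr h.1
            subst ha
            exact h.2 (by rw [← val_eq_leafIdx hF e]; exact e.prop)
        | Sum.inr e2 =>
            rw [subdiv_adj_rl] at h
            have : e2 = e := by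
              apply Subtype.ext
              rw [eq_of_mem_leaf hF e2.prop h, ← val_eq_leafIdx hF e]
            exact Or.inr (congrArg Sum.inr this)
    · intro e _ e' _ hne
      rw [Set.disjoint_left]
      rintro v (rfl | rfl) hv'
      · rcases hv' with h | h
        · exact hne (leafIdx_injective hF (by simpa using h))
        · simp at h
      · rcases hv' with h | h
        · simp at h
        · exact hne (Sum.inr_injective h)
    · rintro e _ (h | h) <;> simp at h
  · have := dom_card_lower (TT F) D hD (Finset.univ : Finset (Fin t))
      (fun i => Sum.inl (Sum.inr i))
      (fun i => {v : V1 F | v = Sum.inl (Sum.inr i) ∨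
        ∃ e : {e : Sym2 (V0 t) // e ∈ F}, v = Sum.inr e ∧ Sum.inr i ∈ e.val}) ?_ ?_
    · have h2 : (Finset.univ : Finset (Fin t)).card = t := by simp
      omega
    · intro i _ u hu h
      rcases h with rfl | h
      · exact Or.inl rfl
      · match u with
        | Sum.inl a =>
            rw [subdiv_adj_ll] at h
            have ha := star_adj_inr h.1
            subst ha
            exact absurd hu hc
        | Sum.inr e2 =>
            rw [subdiv_adj_rl] at h
            exact Or.inr ⟨e2, rfl, h⟩
    · intro i _ j _ hne
      rw [Set.disjoint_left]
      rintro v (rfl | ⟨e, rfl, he⟩) hv'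
      · rcases hv' with h | ⟨e, he, _⟩
        · exact hne (by simpa using h)
        · simp at he
      · rcases hv' with h | ⟨e', he', hj⟩
        · simp at h
        · have : e = e' := Sum.inr_injective he'
          subst this
          exact hne (leaf_unique hF e.prop he hj)

omit hF in
/-- Upper bound: the wounded spider has a dominating set of size `F.card + 1`. -/
lemma upperT : ∃ D : Finset (V1 F), D.card = F.card + 1 ∧ (TT F).IsDomSet ↑D := by
  classical
  refine ⟨insert (Sum.inl (Sum.inl 0))
    (Finset.univ.image (fun e : {e : Sym2 (V0 t) // e ∈ F} => (Sum.inr e : V1 F))), ?_, ?_⟩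
  · rw [Finset.card_insert_of_notMem (by simp), Finset.card_image_of_injective _
      Sum.inr_injective]
    simp
  · intro v hv
    simp only [Finset.coe_insert, Set.mem_insert_iff, Finset.coe_image] at hv
    push_neg at hv
    match v with
    | Sum.inl (Sum.inl a) =>
        exact absurd (by rw [Subsingleton.elim a 0] :
          (Sum.inl (Sum.inl a) : V1 F) = Sum.inl (Sum.inl 0)) hv.1
    | Sum.inr e =>
        exact (hv.2 ⟨e, by simp, rfl⟩).elim
    | Sum.inl (Sum.inr i) =>
        by_cases hmem : s((Sum.inl 0 : V0 t), Sum.inr i) ∈ F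
        · refine ⟨Sum.inr ⟨_, hmem⟩, by simp, ?_⟩
          rw [subdiv_adj_rl, mem_star_edge]
          exact Or.inr rfl
        · refine ⟨Sum.inl (Sum.inl 0), by simp, ?_⟩
          rw [subdiv_adj_ll]
          exact ⟨by simp, hmem⟩

end LevelOne
section Counting

variable {t : ℕ} {F : Finset (Sym2 (V0 t))}
variable (hF : ↑F ⊆ (completeBipartiteGraph (Fin 1) (Fin t)).edgeSet)

include hF in
lemma exists_leafedge (F'' : Finset (Sym2 (V1 F))) (hF'' : ↑F'' ⊆ (TT F).edgeSet)
    (hbig : 2 * F.card < F''.card) :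
    ∃ i : Fin t, s((Sum.inl 0 : V0 t), Sum.inr i) ∉ F ∧
      s((Sum.inl (Sum.inl 0) : V1 F), (Sum.inl (Sum.inr i) : V1 F)) ∈ F'' := by
  classical
  by_contra hno
  push_neg at hno
  set φ : Sym2 (V1 F) → Option {e : Sym2 (V0 t) // e ∈ F} × Bool := fun x =>
    if h : ∃ e : {e : Sym2 (V0 t) // e ∈ F}, (Sum.inr e : V1 F) ∈ x then
      (some h.choose, decide (∃ i : Fin t, (Sum.inl (Sum.inr i) : V1 F) ∈ x))
    else (none, false) with hφ
  have key : ∀ x ∈ F'', ∃ e : {e : Sym2 (V0 t) // e ∈ F},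
      (x = s(Sum.inl (Sum.inl 0), Sum.inr e) ∧ φ x = (some e, false)) ∨
      (∃ i : Fin t, Sum.inr i ∈ e.val ∧ x = s(Sum.inl (Sum.inr i), Sum.inr e) ∧
        φ x = (some e, true)) := by
    intro x hx
    rcases Tedge_cases hF (hF'' hx) with ⟨i, rfl, hnF⟩ | ⟨e, rfl⟩ | ⟨i, e, hie, rfl⟩
    · exact absurd hx (hno i hnF)
    · refine ⟨e, Or.inl ⟨rfl, ?_⟩⟩
      have hex : ∃ e' : {e : Sym2 (V0 t) // e ∈ F},
          (Sum.inr e' : V1 F) ∈ (s(Sum.inl (Sum.inl 0), Sum.inr e) : Sym2 (V1 F)) :=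
        ⟨e, by rw [Sym2.mem_iff]; exact Or.inr rfl⟩
      simp only [hφ]
      rw [dif_pos hex]
      have h1 : hex.choose = e := by
        have := hex.choose_spec
        rw [Sym2.mem_iff] at this
        rcases this with h | h <;> simp_all
      have h2 : ¬ ∃ i : Fin t,
          (Sum.inl (Sum.inr i) : V1 F) ∈ (s(Sum.inl (Sum.inl 0), Sum.inr e) : Sym2 (V1 F)) := by
        rintro ⟨i, hi⟩
        rw [Sym2.mem_iff] at hi
        rcases hi with h | h <;> simp_all
      rw [h1]
      simp [h2]
    · refine ⟨e, Or.inr ⟨i, hie, rfl, ?_⟩⟩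
      have hex : ∃ e' : {e : Sym2 (V0 t) // e ∈ F},
          (Sum.inr e' : V1 F) ∈ (s(Sum.inl (Sum.inr i), Sum.inr e) : Sym2 (V1 F)) :=
        ⟨e, by rw [Sym2.mem_iff]; exact Or.inr rfl⟩
      simp only [hφ]
      rw [dif_pos hex]
      have h1 : hex.choose = e := by
        have := hex.choose_spec
        rw [Sym2.mem_iff] at this
        rcases this with h | h <;> simp_all
      have h2 : ∃ j : Fin t,
          (Sum.inl (Sum.inr j) : V1 F) ∈ (s(Sum.inl (Sum.inr i), Sum.inr e) : Sym2 (V1 F)) :=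
        ⟨i, by rw [Sym2.mem_iff]; exact Or.inl rfl⟩
      rw [h1]
      simp [h2]
  have hinj : Set.InjOn φ ↑F'' := by
    intro x1 h1 x2 h2 heq
    obtain ⟨e1, k1⟩ := key x1 h1
    obtain ⟨e2, k2⟩ := key x2 h2
    rcases k1 with ⟨hx1, hφ1⟩ | ⟨i1, hi1, hx1, hφ1⟩ <;>
      rcases k2 with ⟨hx2, hφ2⟩ | ⟨i2, hi2, hx2, hφ2⟩
    · rw [hφ1, hφ2] at heq
      simp only [Prod.mk.injEq, Option.some_inj] at heq
      rw [hx1, hx2, heq.1]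
    · rw [hφ1, hφ2] at heq; simp at heq
    · rw [hφ1, hφ2] at heq; simp at heq
    · rw [hφ1, hφ2] at heq
      simp only [Prod.mk.injEq, Option.some_inj] at heq
      obtain ⟨rfl, -⟩ := heq
      have : i1 = i2 := leaf_unique hF e1.prop hi1 hi2
      rw [hx1, hx2, this]
  have hsub : ∀ x ∈ F'', φ x ∈ (Finset.univ : Finset ({e : Sym2 (V0 t) // e ∈ F} × Bool)).image
      (fun p => ((some p.1 : Option {e : Sym2 (V0 t) // e ∈ F}), p.2)) := by
    intro x hx
    obtain ⟨e, k⟩ := key x hx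
    rcases k with ⟨_, hφ1⟩ | ⟨i, _, _, hφ1⟩ <;> rw [hφ1] <;>
      exact Finset.mem_image.mpr ⟨(e, _), Finset.mem_univ _, rfl⟩
  have hle := Finset.card_le_card_of_injOn φ hsub hinj
  have h1 := Finset.card_image_le (s := (Finset.univ : Finset ({e : Sym2 (V0 t) // e ∈ F} × Bool)))
    (f := fun p => ((some p.1 : Option {e : Sym2 (V0 t) // e ∈ F}), p.2))
  have h2 : (Finset.univ : Finset ({e : Sym2 (V0 t) // e ∈ F} × Bool)).card = F.card * 2 := by
    simp [Fintype.card_prod]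
  omega

end Counting
section Counting2

variable {t : ℕ} {F : Finset (Sym2 (V0 t))}
variable (hF : ↑F ⊆ (completeBipartiteGraph (Fin 1) (Fin t)).edgeSet)

include hF in
lemma exists_bothsub (ht : 1 ≤ t) (F'' : Finset (Sym2 (V1 F)))
    (hF'' : ↑F'' ⊆ (TT F).edgeSet) (hbig : t < F''.card) :
    ∃ e : {e : Sym2 (V0 t) // e ∈ F},
      s((Sum.inl (Sum.inl 0) : V1 F), (Sum.inr e : V1 F)) ∈ F'' ∧
      ∀ i : Fin t, Sum.inr i ∈ e.val →
        s((Sum.inl (Sum.inr i) : V1 F), (Sum.inr e : V1 F)) ∈ F'' := by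
  classical
  by_contra hno
  push_neg at hno
  set ψ : Sym2 (V1 F) → Fin t := fun x =>
    if h : ∃ i : Fin t, (Sum.inl (Sum.inr i) : V1 F) ∈ x then h.choose
    else (if h2 : ∃ e : {e : Sym2 (V0 t) // e ∈ F}, (Sum.inr e : V1 F) ∈ x
      then leafIdx hF h2.choose else ⟨0, ht⟩) with hψ
  have key : ∀ x ∈ F'',
      (∃ i : Fin t, s((Sum.inl 0 : V0 t), Sum.inr i) ∉ F ∧
        x = s(Sum.inl (Sum.inl 0), Sum.inl (Sum.inr i)) ∧ ψ x = i) ∨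
      (∃ e : {e : Sym2 (V0 t) // e ∈ F},
        x = s(Sum.inl (Sum.inl 0), Sum.inr e) ∧ ψ x = leafIdx hF e) ∨
      (∃ i : Fin t, ∃ e : {e : Sym2 (V0 t) // e ∈ F}, Sum.inr i ∈ e.val ∧
        x = s(Sum.inl (Sum.inr i), Sum.inr e) ∧ ψ x = i) := by
    intro x hx
    rcases Tedge_cases hF (hF'' hx) with ⟨i, rfl, hnF⟩ | ⟨e, rfl⟩ | ⟨i, e, hie, rfl⟩
    · refine Or.inl ⟨i, hnF, rfl, ?_⟩
      have hex : ∃ j : Fin t, (Sum.inl (Sum.inr j) : V1 F) ∈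
          (s(Sum.inl (Sum.inl 0), Sum.inl (Sum.inr i)) : Sym2 (V1 F)) :=
        ⟨i, by rw [Sym2.mem_iff]; exact Or.inr rfl⟩
      simp only [hψ]
      rw [dif_pos hex]
      have := hex.choose_spec
      rw [Sym2.mem_iff] at this
      rcases this with h | h <;> simp_all
    · refine Or.inr (Or.inl ⟨e, rfl, ?_⟩)
      have hno1 : ¬ ∃ j : Fin t, (Sum.inl (Sum.inr j) : V1 F) ∈
          (s(Sum.inl (Sum.inl 0), Sum.inr e) : Sym2 (V1 F)) := by
        rintro ⟨j, hj⟩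
        rw [Sym2.mem_iff] at hj
        rcases hj with h | h <;> simp_all
      have hex : ∃ e' : {e : Sym2 (V0 t) // e ∈ F}, (Sum.inr e' : V1 F) ∈
          (s(Sum.inl (Sum.inl 0), Sum.inr e) : Sym2 (V1 F)) :=
        ⟨e, by rw [Sym2.mem_iff]; exact Or.inr rfl⟩
      simp only [hψ]
      rw [dif_neg hno1, dif_pos hex]
      have := hex.choose_spec
      rw [Sym2.mem_iff] at this
      have : hex.choose = e := by rcases this with h | h <;> simp_all
      rw [this]
    · refine Or.inr (Or.inr ⟨i, e, hie, rfl, ?_⟩)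
      have hex : ∃ j : Fin t, (Sum.inl (Sum.inr j) : V1 F) ∈
          (s(Sum.inl (Sum.inr i), Sum.inr e) : Sym2 (V1 F)) :=
        ⟨i, by rw [Sym2.mem_iff]; exact Or.inl rfl⟩
      simp only [hψ]
      rw [dif_pos hex]
      have := hex.choose_spec
      rw [Sym2.mem_iff] at this
      rcases this with h | h <;> simp_all
  have hinj : Set.InjOn ψ ↑F'' := by
    intro x1 h1 x2 h2 heq
    rcases key x1 h1 with ⟨i1, hn1, hx1, hψ1⟩ | ⟨e1, hx1, hψ1⟩ | ⟨i1, e1, hi1, hx1, hψ1⟩ <;>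
      rcases key x2 h2 with ⟨i2, hn2, hx2, hψ2⟩ | ⟨e2, hx2, hψ2⟩ | ⟨i2, e2, hi2, hx2, hψ2⟩
    · rw [hψ1, hψ2] at heq; rw [hx1, hx2, heq]
    · -- (a,b) impossible
      exfalso
      rw [hψ1, hψ2] at heq
      apply hn1
      have := val_eq_leafIdx hF e2
      rw [← heq] at this
      exact this ▸ e2.prop
    · exfalso
      rw [hψ1, hψ2] at heq
      apply hn1
      have := eq_of_mem_leaf hF e2.prop hi2
      rw [← heq] at this
      exact this ▸ e2.prop
    · exfalso
      rw [hψ1, hψ2] at heq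
      apply hn2
      have := val_eq_leafIdx hF e1
      rw [heq] at this
      exact this ▸ e1.prop
    · rw [hψ1, hψ2] at heq
      rw [hx1, hx2, leafIdx_injective hF heq]
    · -- (b,c): contradiction with hno
      exfalso
      rw [hψ1, hψ2] at heq
      have he12 : e1 = e2 := by
        apply Subtype.ext
        rw [val_eq_leafIdx hF e1, heq, eq_of_mem_leaf hF e2.prop hi2]
      subst he12
      obtain ⟨i0, hi0, hB⟩ := hno e1 (hx1 ▸ h1)
      have : i0 = i2 := leaf_unique hF e1.prop hi0 hi2
      subst this
      exact hB (hx2 ▸ h2)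
    · exfalso
      rw [hψ1, hψ2] at heq
      apply hn2
      have := eq_of_mem_leaf hF e1.prop hi1
      rw [heq] at this
      exact this ▸ e1.prop
    · exfalso
      rw [hψ1, hψ2] at heq
      have he12 : e2 = e1 := by
        apply Subtype.ext
        rw [val_eq_leafIdx hF e2, ← heq, eq_of_mem_leaf hF e1.prop hi1]
      subst he12
      obtain ⟨i0, hi0, hB⟩ := hno e2 (hx2 ▸ h2)
      have : i0 = i1 := leaf_unique hF e2.prop hi0 hi1
      subst this
      exact hB (hx1 ▸ h1)
    · rw [hψ1, hψ2] at heq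
      subst heq
      have he12 : e1 = e2 := by
        apply Subtype.ext
        rw [eq_of_mem_leaf hF e1.prop hi1, eq_of_mem_leaf hF e2.prop hi2]
      rw [hx1, hx2, he12]
  have hle := Finset.card_le_card_of_injOn ψ (fun x _ => Finset.mem_univ (ψ x)) hinj
  have h2 : (Finset.univ : Finset (Fin t)).card = t := by simp
  omega

end Counting2
section Part2

variable {t : ℕ} {F : Finset (Sym2 (V0 t))}
variable (hF : ↑F ⊆ (completeBipartiteGraph (Fin 1) (Fin t)).edgeSet)

include hF in
/-- generic lower bound `F.card + 1` for any subdivision of the wounded spider -/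
lemma lowerG {F' : Finset (Sym2 (V1 F))} (hF' : ↑F' ⊆ (TT F).edgeSet)
    (htk : F.card + 1 ≤ t) (D : Finset (V2 F')) (hD : (GG F').IsDomSet ↑D) :
    F.card + 1 ≤ D.card := by
  classical
  by_cases hc : c2 F' ∈ D
  · have hI : ∀ i ∈ F.attach.image (leafIdx hF),
        s((Sum.inl 0 : V0 t), Sum.inr i) ∈ F ∨
        s((Sum.inl (Sum.inl 0) : V1 F), Sum.inl (Sum.inr i)) ∈ F' := by
      intro i hi
      obtain ⟨e, _, rfl⟩ := Finset.mem_image.mp hi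
      exact Or.inl (by rw [← val_eq_leafIdx hF e]; exact e.prop)
    have := lower_center hF hF' D hD hc _ hI
    rwa [Finset.card_image_of_injective _ (leafIdx_injective hF), Finset.card_attach] at this
  · have := lower_nocenter hF hF' D hD hc ∅ (by simp)
    simp only [Finset.card_empty, Nat.add_zero] at this
    omega

/-- the set of `2 |F|` edges to be subdivided in part (2) -/
noncomputable def F2 : Finset (Sym2 (V1 F)) :=
  F.attach.biUnion (fun e => {s((Sum.inl (Sum.inl 0) : V1 F), Sum.inr e),
    s((Sum.inl (Sum.inr (leafIdx hF e)) : V1 F), Sum.inr e)})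

lemma mem_F2 {x : Sym2 (V1 F)} :
    x ∈ F2 hF ↔ ∃ e : {e : Sym2 (V0 t) // e ∈ F},
      x = s((Sum.inl (Sum.inl 0) : V1 F), Sum.inr e) ∨
      x = s((Sum.inl (Sum.inr (leafIdx hF e)) : V1 F), Sum.inr e) := by
  simp [F2, Finset.mem_biUnion]

include hF in
lemma F2_sub : ↑(F2 hF) ⊆ (TT F).edgeSet := by
  intro x hx
  rw [Finset.mem_coe, mem_F2] at hx
  obtain ⟨e, rfl | rfl⟩ := hx
  · rw [SimpleGraph.mem_edgeSet, subdiv_adj_lr]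
    exact center_mem hF e.prop
  · rw [SimpleGraph.mem_edgeSet, subdiv_adj_lr]
    exact leafIdx_mem hF e

include hF in
lemma F2_card : (F2 hF).card = 2 * F.card := by
  classical
  rw [F2, Finset.card_biUnion]
  · have : ∀ e ∈ F.attach, ({s((Sum.inl (Sum.inl 0) : V1 F), Sum.inr e),
        s((Sum.inl (Sum.inr (leafIdx hF e)) : V1 F), Sum.inr e)} : Finset (Sym2 (V1 F))).card
        = 2 := by
      intro e _
      rw [Finset.card_insert_of_notMem, Finset.card_singleton]
      rw [Finset.mem_singleton]
      intro h
      rw [Sym2.eq_iff] at h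
      rcases h with ⟨h, _⟩ | ⟨h, _⟩ <;> simp at h
    rw [Finset.sum_congr rfl this]
    simp [Finset.card_attach, Nat.mul_comm]
  · intro e _ e' _ hne
    rw [Function.onFun, Finset.disjoint_left]
    intro x hx hx'
    simp only [Finset.mem_insert, Finset.mem_singleton] at hx hx'
    have hmm : (Sum.inr e : V1 F) ∈ x ∧ (Sum.inr e' : V1 F) ∈ x := by
      constructor
      · rcases hx with rfl | rfl <;> (rw [Sym2.mem_iff]; exact Or.inr rfl)
      · rcases hx' with rfl | rfl <;> (rw [Sym2.mem_iff]; exact Or.inr rfl)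
    have : e = e' := by
      rcases hx with rfl | rfl <;>
        · have := hmm.2
          rw [Sym2.mem_iff] at this
          rcases this with h | h <;> simp_all
    exact hne this

include hF in
lemma F2_upper : ∃ D : Finset (V2 (F2 hF)), D.card = F.card + 1 ∧
    (GG (F2 hF)).IsDomSet ↑D := by
  classical
  have hmemB : ∀ e : {e : Sym2 (V0 t) // e ∈ F},
      s((Sum.inl (Sum.inr (leafIdx hF e)) : V1 F), Sum.inr e) ∈ F2 hF := by
    intro e
    rw [mem_F2]
    exact ⟨e, Or.inr rfl⟩
  set g : {e : Sym2 (V0 t) // e ∈ F} → V2 (F2 hF) := fun e =>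
    Sum.inr ⟨_, hmemB e⟩ with hg
  have hginj : Function.Injective g := by
    intro e e' h
    simp only [hg, Sum.inr.injEq, Subtype.mk.injEq, Sym2.eq_iff] at h
    rcases h with ⟨_, h⟩ | ⟨h, _⟩ <;> simp_all
  refine ⟨insert (c2 (F2 hF)) (Finset.univ.image g), ?_, ?_⟩
  · rw [Finset.card_insert_of_notMem (by simp [hg]), Finset.card_image_of_injective _ hginj]
    simp
  · intro v hv
    simp only [Finset.coe_insert, Set.mem_insert_iff, Finset.coe_image] at hv
    push_neg at hv
    match v with
    | Sum.inl (Sum.inl (Sum.inl a)) =>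
        exact absurd (by rw [Subsingleton.elim a 0] :
          (Sum.inl (Sum.inl (Sum.inl a)) : V2 (F2 hF)) = c2 (F2 hF)) hv.1
    | Sum.inl (Sum.inl (Sum.inr i)) =>
        by_cases hmem : s((Sum.inl 0 : V0 t), Sum.inr i) ∈ F
        · refine ⟨g ⟨_, hmem⟩, by simp, ?_⟩
          simp only [hg]
          rw [subdiv_adj_rl, Sym2.mem_iff]
          refine Or.inl ?_
          have : leafIdx hF ⟨_, hmem⟩ = i :=
            leafIdx_eq hF (by rw [mem_star_edge]; exact Or.inr rfl)
          rw [this]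
        · refine ⟨c2 (F2 hF), by simp, ?_⟩
          rw [subdiv_adj_ll, subdiv_adj_ll]
          refine ⟨⟨by simp, hmem⟩, ?_⟩
          rw [mem_F2]
          rintro ⟨e, h | h⟩ <;> (rw [Sym2.eq_iff] at h; rcases h with ⟨_, h⟩ | ⟨h, _⟩ <;>
            simp at h)
    | Sum.inl (Sum.inr e) =>
        refine ⟨g e, by simp, ?_⟩
        simp only [hg]
        rw [subdiv_adj_rl, Sym2.mem_iff]
        exact Or.inr rfl
    | Sum.inr x'' =>
        have hx := x''.prop
        rw [mem_F2] at hx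
        obtain ⟨e, he | he⟩ := hx
        · refine ⟨c2 (F2 hF), by simp, ?_⟩
          rw [subdiv_adj_lr, he, Sym2.mem_iff]
          exact Or.inl rfl
        · exact absurd ⟨e, by simp, congrArg Sum.inr (Subtype.ext he.symm)⟩ hv.2

end Part2
end Wound

theorem stmt9 (t k : ℕ) (ht : 2 ≤ t) (hk1 : 1 ≤ k) (hk2 : k ≤ t - 1)
    (F : Finset (Sym2 (Fin 1 ⊕ Fin t)))
    (hF : ↑F ⊆ (completeBipartiteGraph (Fin 1) (Fin t)).edgeSet)
    (hcard : F.card = t - k) :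
    ((completeBipartiteGraph (Fin 1) (Fin t)).subdiv F).IsQCritical (2 * t - k + 1 - k) := by
  classical
  have hkt : k + 1 ≤ t := by omega
  have hq : 2 * t - k + 1 - k = 2 * (t - k) + 1 := by omega
  constructor
  · intro F'' hF''sub hF''card
    rw [hq] at hF''card
    obtain ⟨DT, hDTcard, hDTdom⟩ := Wound.upperT (F := F)
    have hupper : (Wound.TT F).domNum ≤ F.card + 1 :=
      le_trans (Wound.domNum_le _ DT hDTdom) (le_of_eq hDTcard)
    have hlower : F.card + 2 ≤ ((Wound.TT F).subdiv F'').domNum := by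
      apply Wound.le_domNum
      intro D hD
      by_cases hc : Wound.c2 F'' ∈ D
      · obtain ⟨i0, hi0F, hi0F''⟩ := Wound.exists_leafedge hF F'' hF''sub (by omega)
        have hI : ∀ i ∈ insert i0 (F.attach.image (Wound.leafIdx hF)),
            s((Sum.inl 0 : Wound.V0 t), Sum.inr i) ∈ F ∨
            s((Sum.inl (Sum.inl 0) : Wound.V1 F), Sum.inl (Sum.inr i)) ∈ F'' := by
          intro i hi
          rcases Finset.mem_insert.mp hi with rfl | hi
          · exact Or.inr hi0F''
          · obtain ⟨e, _, rfl⟩ := Finset.mem_image.mp hi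
            exact Or.inl (by rw [← Wound.val_eq_leafIdx hF e]; exact e.prop)
        have hcardI : (insert i0 (F.attach.image (Wound.leafIdx hF))).card = F.card + 1 := by
          rw [Finset.card_insert_of_notMem, Finset.card_image_of_injective _
            (Wound.leafIdx_injective hF), Finset.card_attach]
          intro hmem
          obtain ⟨e, _, he⟩ := Finset.mem_image.mp hmem
          exact hi0F (by rw [← he, ← Wound.val_eq_leafIdx hF e]; exact e.prop)
        have := Wound.lower_center hF hF''sub D hD hc _ hI
        omega
      · by_cases hk2' : 2 ≤ k
        · have := Wound.lower_nocenter hF hF''sub D hD hc ∅ (by simp)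
          simp only [Finset.card_empty, Nat.add_zero] at this
          omega
        · have hk1' : k = 1 := by omega
          obtain ⟨e0, he0A, he0B⟩ := Wound.exists_bothsub hF (by omega) F'' hF''sub (by omega)
          have := Wound.lower_nocenter hF hF''sub D hD hc {e0} ?_
          · simp only [Finset.card_singleton] at this
            omega
          · intro e he
            rw [Finset.mem_singleton] at he
            subst he
            exact ⟨he0A, he0B⟩
    exact lt_of_le_of_lt hupper (lt_of_lt_of_le (Nat.lt_succ_self _) hlower)
  · refine ⟨Wound.F2 hF, Wound.F2_sub hF, ?_, ?_⟩
    · rw [Wound.F2_card hF, hq, hcard]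
      omega
    · obtain ⟨D2, hD2c, hD2d⟩ := Wound.F2_upper hF
      obtain ⟨DT, hDTcard, hDTdom⟩ := Wound.upperT (F := F)
      have h1 : ((Wound.TT F).subdiv (Wound.F2 hF)).domNum = F.card + 1 :=
        le_antisymm (le_trans (Wound.domNum_le _ D2 hD2d) (le_of_eq hD2c))
          (Wound.le_domNum _ _ (Wound.lowerG hF (Wound.F2_sub hF) (by omega)))
      have h2 : (Wound.TT F).domNum = F.card + 1 :=
        le_antisymm (le_trans (Wound.domNum_le _ DT hDTdom) (le_of_eq hDTcard))
          (Wound.le_domNum _ _ (Wound.lowerT hF (by omega)))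
      rw [h1, h2]
end
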